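/- Let ⟨D, S, R⟩ be a DT problem. Then irc_{⟨D,S,R⟩}(n) ≤ irc_{S/((D∖S)∪R)}(n) for all n ∈ ℕ: the runtime complexity of the DT problem is bounded by the innermost runtime complexity of the relative TRS S/((D∖S)∪R). -/

import Mathlib

namespace ParallelComplexity

/-! ## First-order terms -/

inductive Term (σ : Type) (V : Type) : Type where
  | var : V → Term σ V
  | fn : σ → List (Term σ V) → Term σ V

variable {σ V : Type}

mutual
  /-- Application of a substitution to a term. -/
  def Term.subst (θ : V → Term σ V) : Term σ V → Term σ V
    | Term.var x => θ x
    | Term.fn f ts => Term.fn f (Term.substList θ ts)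
  def Term.substList (θ : V → Term σ V) : List (Term σ V) → List (Term σ V)
    | [] => []
    | t :: ts => Term.subst θ t :: Term.substList θ ts
end

mutual
  /-- The size |t| of a term. -/
  def Term.size : Term σ V → ℕ
    | Term.var _ => 1
    | Term.fn _ ts => 1 + Term.sizeList ts
  def Term.sizeList : List (Term σ V) → ℕ
    | [] => 0
    | t :: ts => Term.size t + Term.sizeList ts
end

/-- Subterm `t|π` at a position (positions are lists of argument indices);
`none` if the position is not a position of `t`. -/
def Term.subtermAt : Term σ V → List ℕ → Option (Term σ V)
  | t, [] => some t
  | Term.var _, _ :: _ => none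
  | Term.fn _ ts, i :: π =>
    match ts[i]? with
    | none => none
    | some u => Term.subtermAt u π

/-- `t[s]π`: replacement of the subterm at position `π` by `s`. -/
def Term.replaceAt : Term σ V → List ℕ → Term σ V → Option (Term σ V)
  | _, [], s => some s
  | Term.var _, _ :: _, _ => none
  | Term.fn f ts, i :: π, s =>
    match ts[i]? with
    | none => none
    | some u =>
      match Term.replaceAt u π s with
      | none => none
      | some u' => some (Term.fn f (ts.set i u'))

def Term.isVar (t : Term σ V) : Prop := ∃ x, t = Term.var x

/-- `x` occurs as a variable in the term. -/
inductive Term.VarIn (x : V) : Term σ V → Prop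
  | var : Term.VarIn x (Term.var x)
  | fn {f : σ} {ts : List (Term σ V)} {t : Term σ V} :
      t ∈ ts → Term.VarIn x t → Term.VarIn x (Term.fn f ts)

/-! ## Term rewrite systems -/

structure Rule (σ V : Type) where
  lhs : Term σ V
  rhs : Term σ V

/-- A well-formed TRS: a finite set of rules `ℓ → r` with `ℓ ∉ V` and
`Var(r) ⊆ Var(ℓ)`. -/
def IsWfTRS (R : Set (Rule σ V)) : Prop :=
  R.Finite ∧ (∀ r ∈ R, ¬ r.lhs.isVar) ∧
    ∀ r ∈ R, ∀ x : V, Term.VarIn x r.rhs → Term.VarIn x r.lhs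

def IsRedex (R : Set (Rule σ V)) (t : Term σ V) : Prop :=
  ∃ r ∈ R, ∃ θ : V → Term σ V, t = Term.subst θ r.lhs

/-- An innermost redex: a redex none of whose proper subterms is a redex. -/
def IsInnermostRedex (R : Set (Rule σ V)) (t : Term σ V) : Prop :=
  IsRedex R t ∧
    ∀ π : List ℕ, π ≠ [] → ∀ u, t.subtermAt π = some u → ¬ IsRedex R u

/-- One rewrite step at position `π`. -/
def RewriteAt (R : Set (Rule σ V)) (π : List ℕ) (s t : Term σ V) : Prop :=
  ∃ r ∈ R, ∃ θ : V → Term σ V,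
    s.subtermAt π = some (Term.subst θ r.lhs) ∧
    s.replaceAt π (Term.subst θ r.rhs) = some t

/-- The rewrite relation `s →_R t`. -/
def Rewrite (R : Set (Rule σ V)) (s t : Term σ V) : Prop := ∃ π, RewriteAt R π s t

/-- The innermost rewrite relation `s →i t`. -/
def InnermostRewrite (R : Set (Rule σ V)) (s t : Term σ V) : Prop :=
  ∃ π, ∃ r ∈ R, ∃ θ : V → Term σ V,
    s.subtermAt π = some (Term.subst θ r.lhs) ∧
    IsInnermostRedex R (Term.subst θ r.lhs) ∧
    s.replaceAt π (Term.subst θ r.rhs) = some t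

def NormalForm (R : Set (Rule σ V)) (t : Term σ V) : Prop := ¬ ∃ u, Rewrite R t u

/-- Parallel-innermost rewriting `s ⇉ t`: `s →i⁺ t` and either
(a) `s` is an innermost redex and `s →i t`, or (b) `s = f(s₁,…,sₙ)`,
`t = f(t₁,…,tₙ)` and each `sₖ ⇉ tₖ` or `sₖ = tₖ` is a normal form. -/
inductive ParInnermost (R : Set (Rule σ V)) : Term σ V → Term σ V → Prop
  | redex {s t : Term σ V} :
      Relation.TransGen (InnermostRewrite R) s t →
      IsInnermostRedex R s → InnermostRewrite R s t → ParInnermost R s t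
  | congr (f : σ) (ss ts : List (Term σ V)) :
      Relation.TransGen (InnermostRewrite R) (Term.fn f ss) (Term.fn f ts) →
      ss.length = ts.length →
      -- each `sₖ ⇉ tₖ`, or `sₖ = tₖ` is a normal form (stated as the
      -- classically equivalent implication to satisfy the kernel's
      -- restrictions on nested inductive occurrences)
      (∀ p ∈ ss.zip ts, ¬ (p.1 = p.2 ∧ NormalForm R p.1) → ParInnermost R p.1 p.2) →
      ParInnermost R (Term.fn f ss) (Term.fn f ts)

/-! ## Abstract properties of relations -/

def Confluent {α : Type} (r : α → α → Prop) : Prop :=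
  ∀ s t u, Relation.ReflTransGen r s t → Relation.ReflTransGen r s u →
    ∃ v, Relation.ReflTransGen r t v ∧ Relation.ReflTransGen r u v

def Deterministic {α : Type} (r : α → α → Prop) : Prop :=
  ∀ s t u, r s t → r s u → t = u

def UniformlyConfluent {α : Type} (r : α → α → Prop) : Prop :=
  ∀ s t u, r s t → r s u → t = u ∨ ∃ v, r t v ∧ r u v

/-! ## Derivation height and runtime complexity -/

/-- `e`-th iterate of a relation. -/
def iterRel {α : Type} (r : α → α → Prop) : ℕ → α → α → Prop
  | 0 => fun a b => a = b
  | n + 1 => fun a c => ∃ b, r a b ∧ iterRel r n b c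

/-- Derivation height `Dh(t, →) = sup { e | ∃ t'. t →^e t' } ∈ ℕ ∪ {ω}`. -/
noncomputable def Dh {α : Type} (r : α → α → Prop) (t : α) : ℕ∞ :=
  sSup { e : ℕ∞ | ∃ n : ℕ, e = (n : ℕ∞) ∧ ∃ t', iterRel r n t t' }

/-- Defined symbols: root symbols of left-hand sides. -/
def Defined (R : Set (Rule σ V)) (f : σ) : Prop :=
  ∃ r ∈ R, ∃ ts : List (Term σ V), r.lhs = Term.fn f ts

def HasDefinedRoot (R : Set (Rule σ V)) (t : Term σ V) : Prop :=
  ∃ f ts, t = Term.fn f ts ∧ Defined R f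

/-- Constructor terms: terms over constructor symbols and variables. -/
inductive ConsTerm (R : Set (Rule σ V)) : Term σ V → Prop
  | var (x : V) : ConsTerm R (Term.var x)
  | fn (f : σ) (ts : List (Term σ V)) :
      ¬ Defined R f → (∀ t ∈ ts, ConsTerm R t) → ConsTerm R (Term.fn f ts)

/-- Basic terms: a defined symbol applied to constructor terms. -/
def BasicTerm (R : Set (Rule σ V)) (t : Term σ V) : Prop :=
  ∃ f ts, t = Term.fn f ts ∧ Defined R f ∧ ∀ u ∈ ts, ConsTerm R u

/-- Innermost runtime complexity. -/
noncomputable def irc (R : Set (Rule σ V)) (n : ℕ) : ℕ∞ :=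
  sSup { d : ℕ∞ | ∃ t, BasicTerm R t ∧ t.size ≤ n ∧ d = Dh (InnermostRewrite R) t }

/-- Parallel-innermost runtime complexity. -/
noncomputable def pirc (R : Set (Rule σ V)) (n : ℕ) : ℕ∞ :=
  sSup { d : ℕ∞ | ∃ t, BasicTerm R t ∧ t.size ≤ n ∧ d = Dh (ParInnermost R) t }

/-! ## Critical pairs -/

def RuleVars (r : Rule σ V) : Set V :=
  { x | Term.VarIn x r.lhs ∨ Term.VarIn x r.rhs }

/-- `r₂` is a variant of `r₁` (each is a substitution instance of the other). -/
def IsVariantOf (r₁ r₂ : Rule σ V) : Prop :=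
  ∃ θ₁ θ₂ : V → Term σ V,
    r₂.lhs = Term.subst θ₁ r₁.lhs ∧ r₂.rhs = Term.subst θ₁ r₁.rhs ∧
    r₁.lhs = Term.subst θ₂ r₂.lhs ∧ r₁.rhs = Term.subst θ₂ r₂.rhs

def Unifies (θ : V → Term σ V) (s t : Term σ V) : Prop :=
  Term.subst θ s = Term.subst θ t

def IsMGU (μ : V → Term σ V) (s t : Term σ V) : Prop :=
  Unifies μ s t ∧
    ∀ δ : V → Term σ V, Unifies δ s t →
      ∃ δ' : V → Term σ V, ∀ x : V, Term.subst δ' (μ x) = δ x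

/-- Critical pairs `⟨uσ[rσ]π, vσ⟩` of a TRS, from variable-renamed copies
`ℓ → r` and `u → v` of rules of `R` overlapping at a non-variable position
`π` of `u` (not a root overlap of variants of the same rule). -/
def CriticalPair (R : Set (Rule σ V)) (cp : Term σ V × Term σ V) : Prop :=
  ∃ r₁ r₂ r₁' r₂' : Rule σ V, r₁' ∈ R ∧ r₂' ∈ R ∧
    IsVariantOf r₁' r₁ ∧ IsVariantOf r₂' r₂ ∧
    (∀ x : V, x ∈ RuleVars r₁ → x ∉ RuleVars r₂) ∧
    ∃ (π : List ℕ) (u' : Term σ V),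
      r₂.lhs.subtermAt π = some u' ∧ ¬ u'.isVar ∧
      (π = [] → ¬ IsVariantOf r₁ r₂) ∧
      ∃ μ : V → Term σ V, IsMGU μ r₁.lhs u' ∧
        ∃ w : Term σ V,
          (Term.subst μ r₂.lhs).replaceAt π (Term.subst μ r₁.rhs) = some w ∧
          cp = (w, Term.subst μ r₂.rhs)

/-- `R` is non-overlapping iff it has no critical pairs. -/
def NonOverlapping (R : Set (Rule σ V)) : Prop := ∀ cp, ¬ CriticalPair R cp

/-- An innermost critical overlay: a critical pair at the root position whose
critical peak consists of two innermost rewrite steps. -/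
def InnermostCriticalOverlay (R : Set (Rule σ V)) (cp : Term σ V × Term σ V) : Prop :=
  ∃ r₁ r₂ r₁' r₂' : Rule σ V, r₁' ∈ R ∧ r₂' ∈ R ∧
    IsVariantOf r₁' r₁ ∧ IsVariantOf r₂' r₂ ∧
    (∀ x : V, x ∈ RuleVars r₁ → x ∉ RuleVars r₂) ∧
    ¬ IsVariantOf r₁ r₂ ∧
    ∃ μ : V → Term σ V, IsMGU μ r₁.lhs r₂.lhs ∧
      IsInnermostRedex R (Term.subst μ r₂.lhs) ∧
      cp = (Term.subst μ r₁.rhs, Term.subst μ r₂.rhs)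

/-! ## Positions with defined symbols and structural dependency chains -/

/-- Strict prefix order on positions: `PosGT τ π` iff `τ > π`,
i.e. `∃ π' ≠ ε, π π' = τ`. -/
def PosGT (τ π : List ℕ) : Prop := ∃ π' : List ℕ, π' ≠ [] ∧ π ++ π' = τ

/-- `PosD(t)`: positions of `t` with defined root symbol. -/
def PosD (R : Set (Rule σ V)) (t : Term σ V) : Set (List ℕ) :=
  { π | ∃ u, t.subtermAt π = some u ∧ HasDefinedRoot R u }

/-- Structural dependency chain `⟨π₁,…,πₖ⟩` for `t`: positions in `PosD(t)`
with `π₁ > … > πₖ`. -/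
def SDChain (R : Set (Rule σ V)) (t : Term σ V) (c : List (List ℕ)) : Prop :=
  (∀ π ∈ c, π ∈ PosD R t) ∧ c.Chain' PosGT

/-- Maximal structural dependency chains: `MSDC R t c` iff `c` is a maximal
structural dependency chain for `t`. -/
def MSDC (R : Set (Rule σ V)) (t : Term σ V) (c : List (List ℕ)) : Prop :=
  SDChain R t c ∧
    ((c = [] ∧ PosD R t = ∅) ∨
      ∃ (π₁ : List ℕ) (rest : List (List ℕ)), c = π₁ :: rest ∧
        ∀ π ∈ PosD R t, ¬ PosGT π π₁ ∧ (PosGT π₁ π → π ∈ rest))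

/-! ## Sharp terms, dependency tuples -/

/-- Extended signature: base symbols, sharp symbols `f#`, compound symbols `Com_n`. -/
inductive SharpSym (σ : Type) : Type where
  | base : σ → SharpSym σ
  | sharp : σ → SharpSym σ
  | com : ℕ → SharpSym σ

mutual
  def Term.embed : Term σ V → Term (SharpSym σ) V
    | Term.var x => Term.var x
    | Term.fn f ts => Term.fn (SharpSym.base f) (Term.embedList ts)
  def Term.embedList : List (Term σ V) → List (Term (SharpSym σ) V)
    | [] => []
    | t :: ts => Term.embed t :: Term.embedList ts
end

open Classical in
/-- `t#`: mark the root of `t` with its sharp symbol (if defined). -/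
noncomputable def Term.sharp (R : Set (Rule σ V)) : Term σ V → Term (SharpSym σ) V
  | Term.var x => Term.var x
  | Term.fn f ts =>
    if Defined R f then Term.fn (SharpSym.sharp f) (Term.embedList ts)
    else Term.fn (SharpSym.base f) (Term.embedList ts)

open Classical in
/-- Sharping on terms over the extended signature: for `t = f(…)` with `f` a
defined (base) symbol of `R`, mark the root; otherwise `t# = t`. -/
noncomputable def sharpC (R : Set (Rule σ V)) : Term (SharpSym σ) V → Term (SharpSym σ) V
  | Term.fn (SharpSym.base f) ts =>
    if Defined R f then Term.fn (SharpSym.sharp f) ts else Term.fn (SharpSym.base f) ts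
  | t => t

def liftRule (r : Rule σ V) : Rule (SharpSym σ) V :=
  { lhs := r.lhs.embed, rhs := r.rhs.embed }

def liftRules (R : Set (Rule σ V)) : Set (Rule (SharpSym σ) V) := liftRule '' R

/-- The dependency tuple `ℓ# → Com_k(u₁#,…,uₖ#)` built from subterms `u₁,…,uₖ`
of the right-hand side. -/
noncomputable def mkDT (R : Set (Rule σ V)) (ρ : Rule σ V) (us : List (Term σ V)) :
    Rule (SharpSym σ) V :=
  { lhs := Term.sharp R ρ.lhs,
    rhs := Term.fn (SharpSym.com us.length) (us.map (Term.sharp R)) }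

/-- `DTpar(ℓ → r)`: one dependency tuple per maximal structural dependency chain. -/
def DTparRule (R : Set (Rule σ V)) (ρ : Rule σ V) : Set (Rule (SharpSym σ) V) :=
  { d | ∃ (c : List (List ℕ)) (us : List (Term σ V)),
      MSDC R ρ.rhs c ∧
      List.Forall₂ (fun π u => ρ.rhs.subtermAt π = some u) c us ∧
      d = mkDT R ρ us }

/-- `DTpar(R)`. -/
def DTparSet (R : Set (Rule σ V)) : Set (Rule (SharpSym σ) V) :=
  ⋃ ρ ∈ R, DTparRule R ρ

/-! ## Chain trees and Cplx -/

/-- A (possibly infinite, finitely branching) tree whose nodes (addressed by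
paths) are labelled with a dependency tuple and a substitution; the child at
direction `i` corresponds to argument `i` of the `Com` symbol. -/
structure ChainTree (σ V : Type) where
  label : List ℕ → Option (Rule (SharpSym σ) V × (V → Term (SharpSym σ) V))

/-- `T` is a `(D,R)`-chain tree for the sharp term `t`. -/
def IsChainTree (D R : Set (Rule (SharpSym σ) V)) (T : ChainTree σ V)
    (t : Term (SharpSym σ) V) : Prop :=
  (∃ r ν, T.label [] = some (r, ν) ∧ Term.subst ν r.lhs = t) ∧
  (∀ (p : List ℕ) (i : ℕ), T.label (p ++ [i]) ≠ none → T.label p ≠ none) ∧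
  (∀ (p : List ℕ) (r : Rule (SharpSym σ) V) (ν : V → Term (SharpSym σ) V),
    T.label p = some (r, ν) →
      r ∈ D ∧ NormalForm R (Term.subst ν r.lhs) ∧
      ∀ (i : ℕ) (r' : Rule (SharpSym σ) V) (δ : V → Term (SharpSym σ) V),
        T.label (p ++ [i]) = some (r', δ) →
          ∃ (m : ℕ) (vs : List (Term (SharpSym σ) V)),
            r.rhs = Term.fn (SharpSym.com m) vs ∧
            ∃ v, vs[i]? = some v ∧
              Relation.ReflTransGen (InnermostRewrite R)
                (Term.subst ν v) (Term.subst δ r'.lhs))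

/-- `|T|_S`: the number of nodes of `T` labelled with a DT from `S`. -/
noncomputable def treeCount (T : ChainTree σ V) (S : Set (Rule (SharpSym σ) V)) : ℕ∞ :=
  Set.encard { p : List ℕ | ∃ r ν, T.label p = some (r, ν) ∧ r ∈ S }

/-- `Cplx⟨D,S,R⟩(t)`: the supremum of `|T|_S` over all `(D,R)`-chain trees `T`
for `t` (`0` if there is no chain tree). -/
noncomputable def Cplx (D S R : Set (Rule (SharpSym σ) V))
    (t : Term (SharpSym σ) V) : ℕ∞ :=
  sSup { c : ℕ∞ | ∃ T : ChainTree σ V, IsChainTree D R T t ∧ c = treeCount T S }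

/-- `irc⟨D,S,R⟩(n)`: runtime complexity of a DT problem. -/
noncomputable def ircDTP (D S : Set (Rule (SharpSym σ) V)) (R : Set (Rule σ V))
    (n : ℕ) : ℕ∞ :=
  sSup { c : ℕ∞ | ∃ t : Term σ V, BasicTerm R t ∧ t.size ≤ n ∧
    c = Cplx D S (liftRules R) (Term.sharp R t) }

/-! ## Relative rewriting -/

/-- An innermost rewrite step using a rule from `X`, with innermost-ness
relative to the whole system `W`. -/
def InnermostRewriteSub (W X : Set (Rule σ V)) (s t : Term σ V) : Prop :=
  ∃ π, ∃ r ∈ X, ∃ θ : V → Term σ V,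
    s.subtermAt π = some (Term.subst θ r.lhs) ∧
    IsInnermostRedex W (Term.subst θ r.lhs) ∧
    s.replaceAt π (Term.subst θ r.rhs) = some t

/-- Innermost relative rewriting `→i_{A/B}`:
`s →B* s' →A s'' →B* t`, all steps innermost wrt `A ∪ B`. -/
def RelInnermost (A B : Set (Rule σ V)) (s t : Term σ V) : Prop :=
  ∃ s' s'' : Term σ V,
    Relation.ReflTransGen (InnermostRewriteSub (A ∪ B) B) s s' ∧
    InnermostRewriteSub (A ∪ B) A s' s'' ∧
    Relation.ReflTransGen (InnermostRewriteSub (A ∪ B) B) s'' t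

/-- Innermost runtime complexity of a relative TRS `A/B`. -/
noncomputable def ircRel (A B : Set (Rule σ V)) (n : ℕ) : ℕ∞ :=
  sSup { d : ℕ∞ | ∃ t : Term σ V, BasicTerm (A ∪ B) t ∧ t.size ≤ n ∧
    d = Dh (RelInnermost A B) t }

/-! ## Dependency tuples (abstract DT problems) -/

inductive IsBaseTerm : Term (SharpSym σ) V → Prop
  | var (x : V) : IsBaseTerm (Term.var x)
  | fn (f : σ) (ts : List (Term (SharpSym σ) V)) :
      (∀ t ∈ ts, IsBaseTerm t) → IsBaseTerm (Term.fn (SharpSym.base f) ts)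

def IsSharpTerm (t : Term (SharpSym σ) V) : Prop :=
  ∃ (f : σ) (args : List (Term (SharpSym σ) V)),
    t = Term.fn (SharpSym.sharp f) args ∧ ∀ a ∈ args, IsBaseTerm a

/-- A dependency tuple: a rule `s# → Com_n(t₁#,…,tₙ#)`. -/
def IsDT (r : Rule (SharpSym σ) V) : Prop :=
  IsSharpTerm r.lhs ∧
    ∃ (n : ℕ) (ts : List (Term (SharpSym σ) V)),
      r.rhs = Term.fn (SharpSym.com n) ts ∧ ts.length = n ∧ ∀ t ∈ ts, IsSharpTerm t

/-! ## Argument normal forms -/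

/-- Argument normal form: a variable, or a term all of whose direct arguments
are normal forms. -/
def ArgNF (R : Set (Rule σ V)) (t : Term σ V) : Prop :=
  (∃ x, t = Term.var x) ∨ ∃ f ts, t = Term.fn f ts ∧ ∀ u ∈ ts, NormalForm R u

/-- A parallel-innermost step all of whose rewrites are at positions strictly
below the root. -/
def ParInnermostBelow (R : Set (Rule σ V)) (s t : Term σ V) : Prop :=
  ParInnermost R s t ∧ ¬ IsInnermostRedex R s

/-- `b` is a maximal parallel argument normal form of `u`. -/
noncomputable def MaxANF (R : Set (Rule σ V)) (u b : Term σ V) : Prop :=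
  ArgNF R b ∧ Relation.ReflTransGen (ParInnermostBelow R) u b ∧
    ∀ u', ArgNF R u' → Relation.ReflTransGen (ParInnermostBelow R) u u' →
      Dh (ParInnermost R) u' ≤ Dh (ParInnermost R) b

/-! ## Many-sorted type assignments -/

/-- Well-typedness of a term wrt a sort set `St`, a type assignment `arty`
(argument sorts and result sort for each symbol) and variable typing `vty`. -/
inductive WellTyped {τ : Type} (St : Type) (arty : τ → List St × St) (vty : V → St) :
    Term τ V → St → Prop
  | var (x : V) : WellTyped St arty vty (Term.var x) (vty x)
  | fn (f : τ) (ts : List (Term τ V)) :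
      ts.length = (arty f).1.length →
      (∀ p ∈ ts.zip (arty f).1, WellTyped St arty vty p.1 p.2) →
      WellTyped St arty vty (Term.fn f ts) (arty f).2

/-- A strict total order on positions extending the strict prefix order. -/
def TotalExtOfPrefix (gt' : List ℕ → List ℕ → Prop) : Prop :=
  (∀ π τ, PosGT π τ → gt' π τ) ∧
  (∀ π τ ρ, gt' π τ → gt' τ ρ → gt' π ρ) ∧
  (∀ π τ, gt' π τ → ¬ gt' τ π) ∧
  (∀ π τ, π ≠ τ → gt' π τ ∨ gt' τ π)



/-! ### Auxiliary development -/

section AuxBasic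
variable {σ V : Type}

theorem List.set_self' {α : Type*} : ∀ {ts : List α} {i : ℕ} {u : α},
    ts[i]? = some u → ts.set i u = ts
  | [], i, u, h => by simp at h
  | a :: ts, 0, u, h => by simp_all
  | a :: ts, i+1, u, h => by
    simp only [List.getElem?_cons_succ] at h
    simp [List.set_self' h]

theorem Term.substList_eq_map (θ : V → Term σ V) :
    ∀ ts : List (Term σ V), Term.substList θ ts = ts.map (Term.subst θ)
  | [] => rfl
  | t :: ts => by rw [Term.substList, List.map_cons, Term.substList_eq_map]

theorem Term.embedList_eq_map :
    ∀ ts : List (Term σ V), Term.embedList ts = ts.map Term.embed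
  | [] => rfl
  | t :: ts => by rw [Term.embedList, List.map_cons, Term.embedList_eq_map]

theorem Term.subst_fn (θ : V → Term σ V) (f : σ) (ts : List (Term σ V)) :
    Term.subst θ (Term.fn f ts) = Term.fn f (ts.map (Term.subst θ)) := by
  rw [Term.subst, Term.substList_eq_map]

theorem Term.embed_fn (f : σ) (ts : List (Term σ V)) :
    Term.embed (Term.fn f ts) = Term.fn (SharpSym.base f) (ts.map Term.embed) := by
  rw [Term.embed, Term.embedList_eq_map]

theorem Term.size_mem_le {t : Term σ V} : ∀ {ts : List (Term σ V)}, t ∈ ts →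
    t.size ≤ Term.sizeList ts
  | u :: ts, h => by
    rcases List.mem_cons.1 h with h | h
    · subst h; rw [Term.sizeList]; omega
    · have := Term.size_mem_le h
      rw [Term.sizeList]; omega

/-- Custom induction principle avoiding nested-inductive pain. -/
theorem Term.ind' {motive : Term σ V → Prop}
    (hv : ∀ x, motive (Term.var x))
    (hf : ∀ f ts, (∀ t ∈ ts, motive t) → motive (Term.fn f ts)) :
    ∀ t, motive t := by
  have key : ∀ (n : ℕ) (t : Term σ V), t.size ≤ n → motive t := by
    intro n
    induction n with
    | zero =>
      intro t ht
      cases t with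
      | var x => rw [Term.size] at ht; omega
      | fn f ts => rw [Term.size] at ht; omega
    | succ n ih =>
      intro t ht
      cases t with
      | var x => exact hv x
      | fn f ts =>
        refine hf f ts (fun u hu => ih u ?_)
        have := Term.size_mem_le hu
        rw [Term.size] at ht; omega
  exact fun t => key t.size t le_rfl

theorem Term.size_embed : ∀ t : Term σ V, (Term.embed t).size = t.size := by
  intro t
  induction t using Term.ind' with
  | hv x => rfl
  | hf f ts ih =>
    rw [Term.embed_fn, Term.size, Term.size]
    congr 1
    induction ts with
    | nil => rfl
    | cons u ts ihts =>
      rw [List.map_cons, Term.sizeList, Term.sizeList,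
        ih u (List.mem_cons_self),
        ihts (fun t ht => ih t (List.mem_cons_of_mem _ ht))]

/-! ### Position lemmas -/

theorem Term.subtermAt_nil (t : Term σ V) : t.subtermAt [] = some t := by
  cases t <;> rfl

theorem Term.subtermAt_cons_var (x : V) (i : ℕ) (π : List ℕ) :
    (Term.var x : Term σ V).subtermAt (i :: π) = none := rfl

theorem Term.subtermAt_cons (f : σ) (ts : List (Term σ V)) (i : ℕ) (π : List ℕ) :
    (Term.fn f ts).subtermAt (i :: π) = (ts[i]?).bind (fun u => u.subtermAt π) := by
  cases h : ts[i]? <;> simp [Term.subtermAt, h]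

theorem Term.replaceAt_cons (f : σ) (ts : List (Term σ V)) (i : ℕ) (π : List ℕ)
    (s : Term σ V) :
    (Term.fn f ts).replaceAt (i :: π) s =
      (ts[i]?).bind (fun u => (u.replaceAt π s).map (fun u' => Term.fn f (ts.set i u'))) := by
  cases h : ts[i]? with
  | none => simp [Term.replaceAt, h]
  | some u =>
    cases h2 : u.replaceAt π s <;> simp [Term.replaceAt, h, h2]

theorem Term.replaceAt_nil (t s : Term σ V) : t.replaceAt [] s = some s := by
  cases t <;> rfl

theorem Term.subtermAt_single (f : σ) (ts : List (Term σ V)) (i : ℕ) :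
    (Term.fn f ts).subtermAt [i] = ts[i]? := by
  rw [Term.subtermAt_cons]
  cases h : ts[i]? with
  | none => rfl
  | some u => rw [Option.bind_some, Term.subtermAt_nil]

theorem Term.replaceAt_single {f : σ} {ts : List (Term σ V)} {i : ℕ} {u : Term σ V}
    (h : ts[i]? = some u) (v : Term σ V) :
    (Term.fn f ts).replaceAt [i] v = some (Term.fn f (ts.set i v)) := by
  rw [Term.replaceAt_cons, h, Option.bind_some, Term.replaceAt_nil, Option.map_some]

theorem Term.subtermAt_append : ∀ (p q : List ℕ) (s : Term σ V),
    s.subtermAt (p ++ q) = (s.subtermAt p).bind (fun u => u.subtermAt q)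
  | [], q, s => by rw [List.nil_append, Term.subtermAt_nil, Option.bind_some]
  | i :: p, q, s => by
    cases s with
    | var x => rfl
    | fn f ts =>
      rw [List.cons_append, Term.subtermAt_cons, Term.subtermAt_cons]
      cases h : ts[i]? with
      | none => rfl
      | some u =>
        rw [Option.bind_some, Option.bind_some]
        exact Term.subtermAt_append p q u

theorem Term.replaceAt_isSome : ∀ (p : List ℕ) {s u : Term σ V}, s.subtermAt p = some u →
    ∀ v, ∃ s', s.replaceAt p v = some s'
  | [], s, u, _, v => ⟨v, Term.replaceAt_nil s v⟩
  | i :: p, s, u, h, v => by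
    cases s with
    | var x => simp [Term.subtermAt_cons_var] at h
    | fn f ts =>
      rw [Term.subtermAt_cons] at h
      cases hts : ts[i]? with
      | none => rw [hts] at h; simp at h
      | some w =>
        rw [hts, Option.bind_some] at h
        obtain ⟨w', hw'⟩ := Term.replaceAt_isSome p h v
        exact ⟨Term.fn f (ts.set i w'),
          by rw [Term.replaceAt_cons, hts, Option.bind_some, hw', Option.map_some]⟩

theorem Term.subtermAt_replaceAt : ∀ (p : List ℕ) {s s' v : Term σ V},
    s.replaceAt p v = some s' → s'.subtermAt p = some v
  | [], s, s', v, h => by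
    rw [Term.replaceAt_nil] at h; cases h; exact Term.subtermAt_nil _
  | i :: p, s, s', v, h => by
    cases s with
    | var x => simp [Term.replaceAt] at h
    | fn f ts =>
      rw [Term.replaceAt_cons] at h
      cases hts : ts[i]? with
      | none => rw [hts] at h; simp at h
      | some w =>
        rw [hts, Option.bind_some] at h
        cases hw : w.replaceAt p v with
        | none => rw [hw] at h; simp at h
        | some w' =>
          rw [hw, Option.map_some, Option.some.injEq] at h
          subst h
          rw [Term.subtermAt_cons]
          have hlen : i < ts.length := (List.getElem?_eq_some_iff.1 hts).1
          rw [List.getElem?_set_eq_of_lt _ (by simpa using hlen), Option.bind_some]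
          exact Term.subtermAt_replaceAt p hw

theorem Term.replaceAt_append : ∀ (p q : List ℕ) {s u u' v s' : Term σ V},
    s.subtermAt p = some u → u.replaceAt q v = some u' →
    s.replaceAt p u' = some s' → s.replaceAt (p ++ q) v = some s'
  | [], q, s, u, u', v, s', h1, h2, h3 => by
    rw [Term.subtermAt_nil] at h1; rw [Term.replaceAt_nil] at h3
    cases h1; cases h3; exact h2
  | i :: p, q, s, u, u', v, s', h1, h2, h3 => by
    cases s with
    | var x => simp [Term.subtermAt_cons_var] at h1
    | fn f ts =>
      rw [Term.subtermAt_cons] at h1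
      rw [Term.replaceAt_cons] at h3
      cases hts : ts[i]? with
      | none => rw [hts] at h1; simp at h1
      | some w =>
        rw [hts, Option.bind_some] at h1 h3
        rw [List.cons_append, Term.replaceAt_cons, hts, Option.bind_some]
        cases hw : w.replaceAt p u' with
        | none => rw [hw] at h3; simp at h3
        | some w' =>
          rw [hw, Option.map_some, Option.some.injEq] at h3
          rw [Term.replaceAt_append p q h1 h2 hw, Option.map_some, h3]

theorem Term.replaceAt_self : ∀ (p : List ℕ) {s u : Term σ V},
    s.subtermAt p = some u → s.replaceAt p u = some s
  | [], s, u, h => by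
    rw [Term.subtermAt_nil] at h; cases h; exact Term.replaceAt_nil _ _
  | i :: p, s, u, h => by
    cases s with
    | var x => simp [Term.subtermAt_cons_var] at h
    | fn f ts =>
      rw [Term.subtermAt_cons] at h
      cases hts : ts[i]? with
      | none => rw [hts] at h; simp at h
      | some w =>
        rw [hts, Option.bind_some] at h
        rw [Term.replaceAt_cons, hts, Option.bind_some, Term.replaceAt_self p h,
          Option.map_some, List.set_self' hts]

theorem Term.replaceAt_replaceAt : ∀ (p : List ℕ) {s s₁ s₂ a b : Term σ V},
    s.replaceAt p a = some s₁ → s₁.replaceAt p b = some s₂ →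
    s.replaceAt p b = some s₂
  | [], s, s₁, s₂, a, b, h1, h2 => by
    rw [Term.replaceAt_nil] at h1 h2; cases h1; cases h2; exact Term.replaceAt_nil _ _
  | i :: p, s, s₁, s₂, a, b, h1, h2 => by
    cases s with
    | var x => simp [Term.replaceAt] at h1
    | fn f ts =>
      rw [Term.replaceAt_cons] at h1
      cases hts : ts[i]? with
      | none => rw [hts] at h1; simp at h1
      | some w =>
        rw [hts, Option.bind_some] at h1
        cases hw : w.replaceAt p a with
        | none => rw [hw] at h1; simp at h1
        | some w' =>
          rw [hw, Option.map_some, Option.some.injEq] at h1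
          subst h1
          rw [Term.replaceAt_cons] at h2
          have hlen : i < ts.length := (List.getElem?_eq_some_iff.1 hts).1
          rw [List.getElem?_set_eq_of_lt _ (by simpa using hlen), Option.bind_some] at h2
          cases hw2 : w'.replaceAt p b with
          | none => rw [hw2] at h2; simp at h2
          | some w'' =>
            rw [hw2, Option.map_some, Option.some.injEq] at h2
            subst h2
            rw [Term.replaceAt_cons, hts, Option.bind_some,
              Term.replaceAt_replaceAt p hw hw2, Option.map_some, List.set_set]

end AuxBasic


/-! ### The sharp-renaming translation -/

section KTrans
variable {σ V : Type}

def ksym (e : σ → ℕ) : SharpSym σ → SharpSym σ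
  | SharpSym.base f => SharpSym.base f
  | SharpSym.sharp f => SharpSym.com (2 * e f + 1)
  | SharpSym.com k => SharpSym.com (2 * k + 2)

mutual
def Kt (e : σ → ℕ) : Term (SharpSym σ) V → Term (SharpSym σ) V
  | Term.var x => Term.var x
  | Term.fn s ts => Term.fn (ksym e s) (KtList e ts)
def KtList (e : σ → ℕ) : List (Term (SharpSym σ) V) → List (Term (SharpSym σ) V)
  | [] => []
  | t :: ts => Kt e t :: KtList e ts
end

theorem KtList_eq_map (e : σ → ℕ) :
    ∀ ts : List (Term (SharpSym σ) V), KtList e ts = ts.map (Kt e)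
  | [] => rfl
  | t :: ts => by rw [KtList, List.map_cons, KtList_eq_map]

theorem Kt_fn (e : σ → ℕ) (s : SharpSym σ) (ts : List (Term (SharpSym σ) V)) :
    Kt e (Term.fn s ts) = Term.fn (ksym e s) (ts.map (Kt e)) := by
  rw [Kt, KtList_eq_map]

theorem ksym_ne_sharp (e : σ → ℕ) (s : SharpSym σ) (f : σ) :
    ksym e s ≠ SharpSym.sharp f := by
  cases s <;> simp [ksym]

theorem ksym_base_iff (e : σ → ℕ) (s : SharpSym σ) (f : σ) :
    ksym e s = SharpSym.base f ↔ s = SharpSym.base f := by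
  cases s <;> simp [ksym]

theorem ksym_injective {e : σ → ℕ} (he : Function.Injective e) :
    Function.Injective (ksym e) := by
  intro a b h
  cases a <;> cases b <;> simp [ksym] at h ⊢ <;> first
    | (exact h) | (exact he (by omega)) | omega

theorem Kt_injective {e : σ → ℕ} (he : Function.Injective e) :
    ∀ {t₁ t₂ : Term (SharpSym σ) V}, Kt e t₁ = Kt e t₂ → t₁ = t₂ := by
  intro t₁
  induction t₁ using Term.ind' with
  | hv x => intro t₂ h; cases t₂ with
    | var y => simpa [Kt] using h
    | fn s ts => rw [Kt, Kt_fn] at h; cases h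
  | hf f ts ih =>
    intro t₂ h
    cases t₂ with
    | var y => rw [Kt_fn, Kt] at h; cases h
    | fn s₂ ts₂ =>
      rw [Kt_fn, Kt_fn] at h
      injection h with h1 h2
      have hs : f = s₂ := ksym_injective he h1
      subst hs
      have key : ∀ (as : List (Term (SharpSym σ) V)),
          (∀ t ∈ as, ∀ t₂ : Term (SharpSym σ) V, Kt e t = Kt e t₂ → t = t₂) →
          ∀ bs : List (Term (SharpSym σ) V), as.map (Kt e) = bs.map (Kt e) → as = bs := by
        intro as
        induction as with
        | nil =>
          intro _ bs hb
          cases bs with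
          | nil => rfl
          | cons b bs => simp at hb
        | cons a as iha =>
          intro hmem bs hb
          cases bs with
          | nil => simp at hb
          | cons b bs =>
            simp only [List.map_cons, List.cons.injEq] at hb
            rw [hmem a List.mem_cons_self b hb.1,
              iha (fun t ht => hmem t (List.mem_cons_of_mem _ ht)) bs hb.2]
      rw [key ts (fun t ht t₂ => ih t ht) ts₂ h2]

theorem Kt_embed (e : σ → ℕ) : ∀ u : Term σ V, Kt e (Term.embed u) = Term.embed u := by
  intro u
  induction u using Term.ind' with
  | hv x => rfl
  | hf f ts ih =>
    rw [Term.embed_fn, Kt_fn]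
    simp only [ksym, List.map_map]
    congr 1
    exact List.map_congr_left (fun t ht => ih t ht)

theorem Kt_subst_embed (e : σ → ℕ) (θ : V → Term (SharpSym σ) V) :
    ∀ l : Term σ V, Kt e (Term.subst θ (Term.embed l)) =
      Term.subst (fun x => Kt e (θ x)) (Term.embed l) := by
  intro l
  induction l using Term.ind' with
  | hv x => rfl
  | hf f ls ih =>
    rw [Term.embed_fn, Term.subst_fn, Term.subst_fn, Kt_fn]
    simp only [ksym, List.map_map]
    congr 1
    exact List.map_congr_left (fun t ht => ih t ht)

theorem subst_congr_embed {θ₁ θ₂ : V → Term (SharpSym σ) V} :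
    ∀ {l : Term σ V}, (∀ x, Term.VarIn x l → θ₁ x = θ₂ x) →
      Term.subst θ₁ (Term.embed l) = Term.subst θ₂ (Term.embed l) := by
  intro l
  induction l using Term.ind' with
  | hv x => intro h; exact h x Term.VarIn.var
  | hf f ls ih =>
    intro h
    rw [Term.embed_fn, Term.subst_fn, Term.subst_fn]
    congr 1
    simp only [List.map_map]
    refine List.map_congr_left (fun t ht => ih t ht ?_)
    exact fun x hx => h x (Term.VarIn.fn ht hx)

theorem subtermAt_Kt (e : σ → ℕ) : ∀ (q : List ℕ) {t w : Term (SharpSym σ) V},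
    t.subtermAt q = some w → (Kt e t).subtermAt q = some (Kt e w)
  | [], t, w, h => by
    rw [Term.subtermAt_nil] at h; cases h; exact Term.subtermAt_nil _
  | i :: q, t, w, h => by
    cases t with
    | var x => simp [Term.subtermAt_cons_var] at h
    | fn s ts =>
      rw [Term.subtermAt_cons] at h
      cases hts : ts[i]? with
      | none => rw [hts] at h; simp at h
      | some u =>
        rw [hts, Option.bind_some] at h
        rw [Kt_fn, Term.subtermAt_cons, List.getElem?_map, hts, Option.map_some,
          Option.bind_some]
        exact subtermAt_Kt e q h

theorem subtermAt_Kt_rev (e : σ → ℕ) : ∀ (q : List ℕ) {t w : Term (SharpSym σ) V},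
    (Kt e t).subtermAt q = some w →
    ∃ w', t.subtermAt q = some w' ∧ w = Kt e w'
  | [], t, w, h => by
    rw [Term.subtermAt_nil] at h; cases h; exact ⟨t, Term.subtermAt_nil t, rfl⟩
  | i :: q, t, w, h => by
    cases t with
    | var x => simp [Kt, Term.subtermAt_cons_var] at h
    | fn s ts =>
      rw [Kt_fn, Term.subtermAt_cons, List.getElem?_map] at h
      cases hts : ts[i]? with
      | none => rw [hts] at h; simp at h
      | some u =>
        rw [hts, Option.map_some, Option.bind_some] at h
        obtain ⟨w', hw1, hw2⟩ := subtermAt_Kt_rev e q h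
        exact ⟨w', by rw [Term.subtermAt_cons, hts, Option.bind_some]; exact hw1, hw2⟩

theorem replaceAt_Kt (e : σ → ℕ) : ∀ (q : List ℕ) {t v w : Term (SharpSym σ) V},
    t.replaceAt q v = some w → (Kt e t).replaceAt q (Kt e v) = some (Kt e w)
  | [], t, v, w, h => by
    rw [Term.replaceAt_nil] at h; cases h; exact Term.replaceAt_nil _ _
  | i :: q, t, v, w, h => by
    cases t with
    | var x => simp [Term.replaceAt] at h
    | fn s ts =>
      rw [Term.replaceAt_cons] at h
      cases hts : ts[i]? with
      | none => rw [hts] at h; simp at h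
      | some u =>
        rw [hts, Option.bind_some] at h
        cases hu : u.replaceAt q v with
        | none => rw [hu] at h; simp at h
        | some u' =>
          rw [hu, Option.map_some, Option.some.injEq] at h
          subst h
          rw [Kt_fn, Term.replaceAt_cons, List.getElem?_map, hts, Option.map_some,
            Option.bind_some, replaceAt_Kt e q hu, Option.map_some, Kt_fn,
            List.map_set]

/-- Matching back: if the translation of `w` is an instance of a pattern
`embed l`, then so is `w` itself. -/
theorem Kt_match_back {e : σ → ℕ} (he : Function.Injective e) :
    ∀ (l : Term σ V) (w : Term (SharpSym σ) V) (θ : V → Term (SharpSym σ) V),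
      Kt e w = Term.subst θ (Term.embed l) →
      ∃ θ', w = Term.subst θ' (Term.embed l) ∧
        ∀ x, Term.VarIn x l → Kt e (θ' x) = θ x := by
  intro l
  induction l using Term.ind' with
  | hv x =>
    intro w θ h
    refine ⟨fun _ => w, rfl, fun y hy => ?_⟩
    cases hy
    exact h
  | hf f ls ih =>
    intro w θ h
    rw [Term.embed_fn, Term.subst_fn] at h
    cases w with
    | var x => rw [Kt] at h; cases h
    | fn s ts =>
      rw [Kt_fn] at h
      injection h with h1 h2
      rw [ksym_base_iff] at h1
      subst h1
      -- componentwise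
      rw [List.map_map] at h2
      -- build θ' by merging over the list
      have key : ∀ (ls' : List (Term σ V)) (ts' : List (Term (SharpSym σ) V)),
          (∀ l' ∈ ls', ∀ (w : Term (SharpSym σ) V) (θ : V → Term (SharpSym σ) V),
            Kt e w = Term.subst θ (Term.embed l') →
            ∃ θ', w = Term.subst θ' (Term.embed l') ∧
              ∀ x, Term.VarIn x l' → Kt e (θ' x) = θ x) →
          ts'.map (Kt e) = ls'.map (fun l' => Term.subst θ (Term.embed l')) →
          ∃ θ', ts' = ls'.map (fun l' => Term.subst θ' (Term.embed l')) ∧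
            ∀ x, (∃ l' ∈ ls', Term.VarIn x l') → Kt e (θ' x) = θ x := by
        intro ls'
        induction ls' with
        | nil =>
          intro ts' _ hmap
          simp only [List.map_nil, List.map_eq_nil_iff] at hmap
          subst hmap
          exact ⟨θ, by simp, by simp⟩
        | cons l₀ lrest ihl =>
          intro ts' hIH hmap
          cases ts' with
          | nil => simp at hmap
          | cons t₀ trest =>
            simp only [List.map_cons, List.cons.injEq] at hmap
            obtain ⟨h₀, hrest⟩ := hmap
            obtain ⟨θ₀, ht₀, hθ₀⟩ := hIH l₀ List.mem_cons_self t₀ θ h₀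
            obtain ⟨θr, htrest, hθr⟩ := ihl trest (fun l' hl' => hIH l' (List.mem_cons_of_mem _ hl')) hrest
            classical
            refine ⟨fun x => if Term.VarIn x l₀ then θ₀ x else θr x, ?_, ?_⟩
            · rw [List.map_cons, List.cons.injEq]
              constructor
              · rw [ht₀]
                exact (subst_congr_embed (fun x hx => by simp [hx])).symm
              · rw [htrest]
                refine List.map_congr_left (fun l' hl' => ?_)
                refine subst_congr_embed (fun x hx => ?_)
                by_cases hx0 : Term.VarIn x l₀
                · simp only [hx0, if_true]
                  refine Kt_injective he ?_
                  rw [hθ₀ x hx0, hθr x ⟨l', hl', hx⟩]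
                · simp [hx0]
            · intro x hx
              by_cases hx0 : Term.VarIn x l₀
              · simp only [hx0, if_true]; exact hθ₀ x hx0
              · obtain ⟨l', hl', hxl⟩ := hx
                rcases List.mem_cons.1 hl' with rfl | hl'
                · exact absurd hxl hx0
                · simp only [hx0, if_false]; exact hθr x ⟨l', hl', hxl⟩
      obtain ⟨θ', hts, hθ'⟩ := key ls ts ih h2
      refine ⟨θ', ?_, ?_⟩
      · rw [Term.embed_fn, Term.subst_fn, List.map_map]; exact congrArg _ hts
      · intro x hx
        cases hx with
        | fn hmem hvin => exact hθ' x ⟨_, hmem, hvin⟩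

end KTrans


/-! ### Redex structure and transfer lemmas -/

section RedexLemmas
variable {σ V : Type}

def SRooted (t : Term (SharpSym σ) V) : Prop :=
  ∃ f ts, t = Term.fn (SharpSym.sharp f) ts

theorem Kt_not_SRooted (e : σ → ℕ) (t : Term (SharpSym σ) V) : ¬ SRooted (Kt e t) := by
  rintro ⟨f, ts, h⟩
  cases t with
  | var x => rw [Kt] at h; cases h
  | fn s us => rw [Kt_fn] at h; injection h with h1 _; exact ksym_ne_sharp e s f h1

variable {D S : Set (Rule (SharpSym σ) V)} {R : Set (Rule σ V)}

theorem liftRules_lhs {r' : Rule (SharpSym σ) V} (hR : IsWfTRS R)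
    (h : r' ∈ liftRules R) :
    ∃ (ρ : Rule σ V) (g : σ) (ls : List (Term σ V)),
      ρ ∈ R ∧ r' = liftRule ρ ∧ ρ.lhs = Term.fn g ls := by
  obtain ⟨ρ, hρ, rfl⟩ := h
  cases hl : ρ.lhs with
  | var x => exact absurd ⟨x, hl⟩ (hR.2.1 ρ hρ)
  | fn g ls => exact ⟨ρ, g, ls, hρ, rfl, hl⟩

theorem redex_classify (hD : ∀ d ∈ D, IsDT d) (hS : S ⊆ D) (hR : IsWfTRS R)
    {u : Term (SharpSym σ) V}
    (h : IsRedex (S ∪ ((D \ S) ∪ liftRules R)) u) :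
    SRooted u ∨ IsRedex (liftRules R) u := by
  obtain ⟨r, hr, θ, rfl⟩ := h
  have hcase : r ∈ D ∨ r ∈ liftRules R := by
    rcases hr with hr | hr | hr
    · exact Or.inl (hS hr)
    · exact Or.inl hr.1
    · exact Or.inr hr
  rcases hcase with hr' | hr'
  · obtain ⟨⟨f, args, hlhs, _⟩, _⟩ := hD r hr'
    rw [hlhs, Term.subst_fn]
    exact Or.inl ⟨f, _, rfl⟩
  · exact Or.inr ⟨r, hr', θ, rfl⟩

theorem rewrite_of_redex_at {X : Set (Rule σ V)} {u w : Term σ V} {π : List ℕ}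
    (hsub : u.subtermAt π = some w) (hw : IsRedex X w) : ∃ u', Rewrite X u u' := by
  obtain ⟨r, hr, θ, rfl⟩ := hw
  obtain ⟨u', hu'⟩ := Term.replaceAt_isSome π hsub (Term.subst θ r.rhs)
  exact ⟨u', π, r, hr, θ, hsub, hu'⟩

theorem upgrade_innermost (hD : ∀ d ∈ D, IsDT d) (hS : S ⊆ D) (hR : IsWfTRS R)
    {u : Term (SharpSym σ) V}
    (hns : ∀ p w, u.subtermAt p = some w → ¬ SRooted w)
    (hin : IsInnermostRedex (liftRules R) u) :
    IsInnermostRedex (S ∪ ((D \ S) ∪ liftRules R)) u := by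
  obtain ⟨⟨r, hr, θ, rfl⟩, hpr⟩ := hin
  refine ⟨⟨r, Or.inr (Or.inr hr), θ, rfl⟩, fun π hπ w hw hred => ?_⟩
  rcases redex_classify hD hS hR hred with h | h
  · exact hns π w hw h
  · exact hpr π hπ w hw h

theorem innermost_node (hD : ∀ d ∈ D, IsDT d) (hS : S ⊆ D) (hR : IsWfTRS R)
    {r : Rule (SharpSym σ) V} {θ : V → Term (SharpSym σ) V}
    (hr : r ∈ D)
    (hNF : NormalForm (liftRules R) (Term.subst θ r.lhs))
    (hANS : ∀ p w, p ≠ [] → (Term.subst θ r.lhs).subtermAt p = some w → ¬ SRooted w) :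
    IsInnermostRedex (S ∪ ((D \ S) ∪ liftRules R)) (Term.subst θ r.lhs) := by
  classical
  have hrW : r ∈ S ∪ ((D \ S) ∪ liftRules R) := by
    by_cases h : r ∈ S
    · exact Or.inl h
    · exact Or.inr (Or.inl ⟨hr, h⟩)
  refine ⟨⟨r, hrW, θ, rfl⟩, fun π hπ w hw hred => ?_⟩
  rcases redex_classify hD hS hR hred with h | h
  · exact hANS π w hπ hw h
  · exact hNF (rewrite_of_redex_at hw h)

/-! ### The below-root renaming `KS` -/

def KS (e : σ → ℕ) : Term (SharpSym σ) V → Term (SharpSym σ) V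
  | Term.var x => Term.var x
  | Term.fn s ts => Term.fn s (ts.map (Kt e))

theorem subst_base_Kt (e : σ → ℕ) (ν : V → Term (SharpSym σ) V)
    {a : Term (SharpSym σ) V} (ha : IsBaseTerm a) :
    Term.subst (fun x => Kt e (ν x)) a = Kt e (Term.subst ν a) := by
  induction ha with
  | var x => rfl
  | fn f ts hts ih =>
    rw [Term.subst_fn, Term.subst_fn, Kt_fn]
    simp only [ksym, List.map_map]
    congr 1
    exact List.map_congr_left (fun t ht => ih t ht)

theorem subst_sharp_KS (e : σ → ℕ) (ν : V → Term (SharpSym σ) V)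
    {v : Term (SharpSym σ) V} (hv : IsSharpTerm v) :
    Term.subst (fun x => Kt e (ν x)) v = KS e (Term.subst ν v) := by
  obtain ⟨f, args, rfl, hargs⟩ := hv
  rw [Term.subst_fn, Term.subst_fn, KS]
  congr 1
  rw [List.map_map]
  exact List.map_congr_left (fun a ha => subst_base_Kt e ν (hargs a ha))

theorem SRooted_subst_sharp {v : Term (SharpSym σ) V} (hv : IsSharpTerm v)
    (ν : V → Term (SharpSym σ) V) : SRooted (Term.subst ν v) := by
  obtain ⟨f, args, rfl, _⟩ := hv
  rw [Term.subst_fn]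
  exact ⟨f, _, rfl⟩

theorem KS_subtermAt_rev (e : σ → ℕ) {t w : Term (SharpSym σ) V} {i : ℕ} {π : List ℕ}
    (h : (KS e t).subtermAt (i :: π) = some w) :
    ∃ w', t.subtermAt (i :: π) = some w' ∧ w = Kt e w' := by
  cases t with
  | var x => rw [KS, Term.subtermAt_cons_var] at h; cases h
  | fn s ts =>
    rw [KS, Term.subtermAt_cons, List.getElem?_map] at h
    cases hts : ts[i]? with
    | none => rw [hts] at h; simp at h
    | some u =>
      rw [hts, Option.map_some, Option.bind_some] at h
      obtain ⟨w', h1, h2⟩ := subtermAt_Kt_rev e π h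
      exact ⟨w', by rw [Term.subtermAt_cons, hts, Option.bind_some]; exact h1, h2⟩

theorem KS_ANS (e : σ → ℕ) (t : Term (SharpSym σ) V) :
    ∀ p w, p ≠ [] → (KS e t).subtermAt p = some w → ¬ SRooted w := by
  intro p w hp hw
  cases p with
  | nil => exact absurd rfl hp
  | cons i π =>
    obtain ⟨w', _, rfl⟩ := KS_subtermAt_rev e hw
    exact Kt_not_SRooted e w'

theorem NF_KS {e : σ → ℕ} (he : Function.Injective e) (hR : IsWfTRS R)
    {u : Term (SharpSym σ) V} (hS : SRooted u)
    (hNF : NormalForm (liftRules R) u) :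
    NormalForm (liftRules R) (KS e u) := by
  rintro ⟨x, π, r', hr', θ, hsub, hrepl⟩
  obtain ⟨ρ, g, ls, hρ, rfl, hlhs⟩ := liftRules_lhs hR hr'
  obtain ⟨f, ts, rfl⟩ := hS
  cases π with
  | nil =>
    rw [Term.subtermAt_nil, Option.some.injEq] at hsub
    rw [KS] at hsub
    rw [show (liftRule ρ).lhs = ρ.lhs.embed from rfl, hlhs, Term.embed_fn,
      Term.subst_fn] at hsub
    cases hsub
  | cons i π' =>
    obtain ⟨w', hw1, hw2⟩ := KS_subtermAt_rev e hsub
    rw [show (liftRule ρ).lhs = ρ.lhs.embed from rfl, hlhs] at hw2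
    obtain ⟨θ', hw', _⟩ := Kt_match_back he (Term.fn g ls) w' θ hw2.symm
    refine hNF (rewrite_of_redex_at hw1 ⟨liftRule ρ, hr', θ', ?_⟩)
    rw [show (liftRule ρ).lhs = ρ.lhs.embed from rfl, hlhs]; exact hw'

/-- Transfer of an innermost `liftRules R` step along `KS`, upgraded to a
`B`-step that is innermost for the whole system. -/
theorem step_transfer {e : σ → ℕ} (he : Function.Injective e)
    (hD : ∀ d ∈ D, IsDT d) (hS : S ⊆ D) (hR : IsWfTRS R)
    {a b : Term (SharpSym σ) V} (ha : SRooted a)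
    (hstep : InnermostRewrite (liftRules R) a b) :
    InnermostRewriteSub (S ∪ ((D \ S) ∪ liftRules R)) ((D \ S) ∪ liftRules R)
      (KS e a) (KS e b) ∧ SRooted b := by
  obtain ⟨π, r', hr', θ, hsub, hinner, hrepl⟩ := hstep
  obtain ⟨ρ, g, ls, hρ, rfl, hlhs⟩ := liftRules_lhs hR hr'
  have hlhs' : (liftRule ρ).lhs = ρ.lhs.embed := rfl
  have hrhs' : (liftRule ρ).rhs = ρ.rhs.embed := rfl
  obtain ⟨f, ts, rfl⟩ := ha
  cases π with
  | nil =>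
    rw [Term.subtermAt_nil, Option.some.injEq] at hsub
    rw [hlhs', hlhs, Term.embed_fn, Term.subst_fn] at hsub
    cases hsub
  | cons i π' =>
    rw [Term.subtermAt_cons] at hsub
    rw [Term.replaceAt_cons] at hrepl
    cases hts : ts[i]? with
    | none => rw [hts] at hsub; simp at hsub
    | some tᵢ =>
      rw [hts, Option.bind_some] at hsub hrepl
      cases htr : tᵢ.replaceAt π' (Term.subst θ (liftRule ρ).rhs) with
      | none => rw [htr] at hrepl; simp at hrepl
      | some tᵢ' =>
        rw [htr, Option.map_some, Option.some.injEq] at hrepl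
        subst hrepl
        constructor
        · refine ⟨i :: π', liftRule ρ, Or.inr hr', fun x => Kt e (θ x), ?_, ?_, ?_⟩
          · -- subterm condition
            rw [KS, Term.subtermAt_cons, List.getElem?_map, hts, Option.map_some,
              Option.bind_some]
            have := subtermAt_Kt e π' hsub
            rw [hlhs', Kt_subst_embed] at this
            exact this
          · -- innermost condition
            rw [hlhs', ← Kt_subst_embed]
            refine upgrade_innermost hD hS hR
              (fun p w hw => by
                obtain ⟨w', _, rfl⟩ := subtermAt_Kt_rev e p hw
                exact Kt_not_SRooted e w') ?_
            obtain ⟨⟨r₂, hr₂, θ₂, hredex⟩, hpr⟩ := hinner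
            refine ⟨⟨liftRule ρ, hr', fun x => Kt e (θ x), by rw [hlhs', Kt_subst_embed]⟩,
              fun q hq w hw hred => ?_⟩
            obtain ⟨w', hw1, rfl⟩ := subtermAt_Kt_rev e q hw
            obtain ⟨r₃, hr₃, θ₃, hw3⟩ := hred
            obtain ⟨ρ₃, g₃, ls₃, hρ₃, rfl, hlhs₃⟩ := liftRules_lhs hR hr₃
            rw [show (liftRule ρ₃).lhs = ρ₃.lhs.embed from rfl, hlhs₃] at hw3
            obtain ⟨θ₃', hw3', _⟩ := Kt_match_back he (Term.fn g₃ ls₃) w' θ₃ hw3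
            exact hpr q hq w' hw1 ⟨liftRule ρ₃, hr₃,
              θ₃', by rw [show (liftRule ρ₃).lhs = ρ₃.lhs.embed from rfl, hlhs₃]; exact hw3'⟩
          · -- replacement condition
            rw [KS, Term.replaceAt_cons, List.getElem?_map, hts, Option.map_some,
              Option.bind_some]
            have := replaceAt_Kt e π' htr
            rw [hrhs', Kt_subst_embed] at this
            rw [hrhs', this, Option.map_some, KS, List.map_set]
        · exact ⟨f, _, rfl⟩

theorem chain_transfer {e : σ → ℕ} (he : Function.Injective e)
    (hD : ∀ d ∈ D, IsDT d) (hS : S ⊆ D) (hR : IsWfTRS R)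
    {a b : Term (SharpSym σ) V} (ha : SRooted a)
    (hchain : Relation.ReflTransGen (InnermostRewrite (liftRules R)) a b) :
    Relation.ReflTransGen
      (InnermostRewriteSub (S ∪ ((D \ S) ∪ liftRules R)) ((D \ S) ∪ liftRules R))
      (KS e a) (KS e b) ∧ SRooted b := by
  induction hchain with
  | refl => exact ⟨Relation.ReflTransGen.refl, ha⟩
  | tail hcb hstep ih =>
    obtain ⟨hrtg, hsr⟩ := ih
    obtain ⟨hstep', hsr'⟩ := step_transfer he hD hS hR hsr hstep
    exact ⟨hrtg.tail hstep', hsr'⟩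

end RedexLemmas


/-! ### Iteration lemmas -/

section IterLemmas
variable {α : Type} {r : α → α → Prop}

theorem iterRel_add {a b : ℕ} : ∀ {s m u : α}, iterRel r a s m → iterRel r b m u →
    iterRel r (a + b) s u := by
  induction a with
  | zero => intro s m u h1 h2; cases h1; simpa using h2
  | succ n ih =>
    intro s m u h1 h2
    obtain ⟨w, hw, hrest⟩ := h1
    rw [Nat.succ_add]
    exact ⟨w, hw, ih hrest h2⟩

theorem iterRel_succ' {c : ℕ} : ∀ {s t u : α}, iterRel r c s t → r t u →
    iterRel r (c + 1) s u := by
  induction c with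
  | zero => intro s t u h1 h2; cases h1; exact ⟨u, h2, rfl⟩
  | succ n ih =>
    intro s t u h1 h2
    obtain ⟨w, hw, hrest⟩ := h1
    exact ⟨w, hw, ih hrest h2⟩

theorem iterRel_trunc {c k : ℕ} (hk : k ≤ c) : ∀ {s t : α}, iterRel r c s t →
    ∃ t', iterRel r k s t' := by
  induction c generalizing k with
  | zero =>
    intro s t h
    obtain rfl := Nat.le_zero.1 hk
    exact ⟨s, rfl⟩
  | succ n ih =>
    intro s t h
    obtain ⟨w, hw, hrest⟩ := h
    cases k with
    | zero => exact ⟨s, rfl⟩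
    | succ k' =>
      obtain ⟨t', ht'⟩ := ih (k := k') (by omega) hrest
      exact ⟨t', w, hw, ht'⟩

end IterLemmas

/-! ### Context closure -/

section CtxLemmas
variable {τ V : Type} {W X : Set (Rule τ V)}

theorem ctx_step {u u' s : Term τ V} {q : List ℕ}
    (hstep : InnermostRewriteSub W X u u') (hsub : s.subtermAt q = some u) :
    ∃ s', s.replaceAt q u' = some s' ∧ InnermostRewriteSub W X s s' := by
  obtain ⟨π, r, hr, θ, hπ, hin, hrepl⟩ := hstep
  obtain ⟨s', hs'⟩ := Term.replaceAt_isSome q hsub u'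
  refine ⟨s', hs', q ++ π, r, hr, θ, ?_, hin, ?_⟩
  · rw [Term.subtermAt_append, hsub, Option.bind_some]; exact hπ
  · exact Term.replaceAt_append q π hsub hrepl hs'

theorem ctx_rtg {u u' s : Term τ V} {q : List ℕ}
    (h : Relation.ReflTransGen (InnermostRewriteSub W X) u u')
    (hsub : s.subtermAt q = some u) :
    ∃ s', s.replaceAt q u' = some s' ∧
      Relation.ReflTransGen (InnermostRewriteSub W X) s s' := by
  induction h with
  | refl => exact ⟨s, Term.replaceAt_self q hsub, Relation.ReflTransGen.refl⟩
  | @tail m u' hm hstep ih =>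
    obtain ⟨s₁, hrepl₁, hrtg₁⟩ := ih
    have hsub₁ : s₁.subtermAt q = some m := Term.subtermAt_replaceAt q hrepl₁
    obtain ⟨s₂, hrepl₂, hstep₂⟩ := ctx_step hstep hsub₁
    exact ⟨s₂, Term.replaceAt_replaceAt q hrepl₁ hrepl₂, hrtg₁.tail hstep₂⟩

end CtxLemmas

/-! ### Reach -/

section ReachSec
variable {σ V : Type}
variable (D S : Set (Rule (SharpSym σ) V)) (R : Set (Rule σ V))

/-- Abbreviation for the relative system's base steps. -/
def BS (s t : Term (SharpSym σ) V) : Prop :=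
  InnermostRewriteSub (S ∪ ((D \ S) ∪ liftRules R)) ((D \ S) ∪ liftRules R) s t

/-- Abbreviation for the strict (`S`) steps. -/
def AS (s t : Term (SharpSym σ) V) : Prop :=
  InnermostRewriteSub (S ∪ ((D \ S) ∪ liftRules R)) S s t

theorem rel_eq : RelInnermost S ((D \ S) ∪ liftRules R) = fun s t =>
    ∃ s' s'', Relation.ReflTransGen (BS D S R) s s' ∧ AS D S R s' s'' ∧
      Relation.ReflTransGen (BS D S R) s'' t := rfl

/-- `Reach c s t`: `s` rewrites to `t` by some `B`-steps followed by `c`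
relative steps. -/
def Reach (c : ℕ) (s t : Term (SharpSym σ) V) : Prop :=
  ∃ m, Relation.ReflTransGen (BS D S R) s m ∧
    iterRel (RelInnermost S ((D \ S) ∪ liftRules R)) c m t

variable {D S R}

theorem Reach.of_rtg {s t : Term (SharpSym σ) V}
    (h : Relation.ReflTransGen (BS D S R) s t) : Reach D S R 0 s t :=
  ⟨t, h, rfl⟩

theorem Reach.of_A {s t : Term (SharpSym σ) V} (h : AS D S R s t) :
    Reach D S R 1 s t :=
  ⟨s, Relation.ReflTransGen.refl,
    ⟨t, ⟨s, t, Relation.ReflTransGen.refl, h, Relation.ReflTransGen.refl⟩, rfl⟩⟩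

theorem Reach.of_B {s t : Term (SharpSym σ) V} (h : BS D S R s t) :
    Reach D S R 0 s t := Reach.of_rtg (Relation.ReflTransGen.single h)

theorem rel_absorb_left {s m t : Term (SharpSym σ) V}
    (h1 : Relation.ReflTransGen (BS D S R) s m)
    (h2 : RelInnermost S ((D \ S) ∪ liftRules R) m t) :
    RelInnermost S ((D \ S) ∪ liftRules R) s t := by
  obtain ⟨a, b, hma, hab, hbt⟩ := h2
  exact ⟨a, b, h1.trans hma, hab, hbt⟩

theorem rel_absorb_right {s m t : Term (SharpSym σ) V}
    (h1 : RelInnermost S ((D \ S) ∪ liftRules R) s m)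
    (h2 : Relation.ReflTransGen (BS D S R) m t) :
    RelInnermost S ((D \ S) ∪ liftRules R) s t := by
  obtain ⟨a, b, hsa, hab, hbm⟩ := h1
  exact ⟨a, b, hsa, hab, hbm.trans h2⟩

theorem Reach.absorb_left {c : ℕ} {s₀ s t : Term (SharpSym σ) V}
    (h1 : Relation.ReflTransGen (BS D S R) s₀ s) (h2 : Reach D S R c s t) :
    Reach D S R c s₀ t := by
  obtain ⟨m, hm, hit⟩ := h2
  exact ⟨m, h1.trans hm, hit⟩

theorem iter_absorb_right {c : ℕ} {t t' : Term (SharpSym σ) V}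
    (h2 : Relation.ReflTransGen (BS D S R) t t') :
    ∀ {m}, iterRel (RelInnermost S ((D \ S) ∪ liftRules R)) (c + 1) m t →
      iterRel (RelInnermost S ((D \ S) ∪ liftRules R)) (c + 1) m t' := by
  induction c with
  | zero =>
    rintro m ⟨w, hw, hrest⟩
    cases hrest
    exact ⟨t', rel_absorb_right hw h2, rfl⟩
  | succ k ih =>
    rintro m ⟨w, hw, hrest⟩
    exact ⟨w, hw, ih hrest⟩

theorem Reach.absorb_right {c : ℕ} {s t t' : Term (SharpSym σ) V}
    (h1 : Reach D S R c s t) (h2 : Relation.ReflTransGen (BS D S R) t t') :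
    Reach D S R c s t' := by
  obtain ⟨m, hm, hit⟩ := h1
  cases c with
  | zero => cases hit; exact ⟨t', hm.trans h2, rfl⟩
  | succ n => exact ⟨m, hm, iter_absorb_right h2 hit⟩

theorem Reach.trans {a b : ℕ} {s t u : Term (SharpSym σ) V}
    (h1 : Reach D S R a s t) (h2 : Reach D S R b t u) : Reach D S R (a + b) s u := by
  obtain ⟨m₂, hm₂, hit₂⟩ := h2
  obtain ⟨m₁, hm₁, hit₁⟩ := Reach.absorb_right h1 hm₂
  exact ⟨m₁, hm₁, iterRel_add hit₁ hit₂⟩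

theorem Reach.to_iterRel {c : ℕ} {s t : Term (SharpSym σ) V}
    (h : Reach D S R c s t) :
    ∃ t', iterRel (RelInnermost S ((D \ S) ∪ liftRules R)) c s t' := by
  obtain ⟨m, hm, hit⟩ := h
  cases c with
  | zero => exact ⟨s, rfl⟩
  | succ n =>
    obtain ⟨w, hw, hrest⟩ := hit
    exact ⟨t, ⟨w, rel_absorb_left hm hw, hrest⟩⟩

theorem ctx_rel {u u' s : Term (SharpSym σ) V} {q : List ℕ}
    (h : RelInnermost S ((D \ S) ∪ liftRules R) u u') (hsub : s.subtermAt q = some u) :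
    ∃ s', s.replaceAt q u' = some s' ∧ RelInnermost S ((D \ S) ∪ liftRules R) s s' := by
  obtain ⟨a, b, h1, h2, h3⟩ := h
  obtain ⟨s₁, hr₁, hg₁⟩ := ctx_rtg h1 hsub
  obtain ⟨s₂, hr₂, hg₂⟩ := ctx_step h2 (Term.subtermAt_replaceAt q hr₁)
  obtain ⟨s₃, hr₃, hg₃⟩ := ctx_rtg h3 (Term.subtermAt_replaceAt q hr₂)
  exact ⟨s₃, Term.replaceAt_replaceAt q (Term.replaceAt_replaceAt q hr₁ hr₂) hr₃,
    ⟨s₁, s₂, hg₁, hg₂, hg₃⟩⟩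

theorem ctx_iter {c : ℕ} : ∀ {u u' s : Term (SharpSym σ) V} {q : List ℕ},
    iterRel (RelInnermost S ((D \ S) ∪ liftRules R)) c u u' →
    s.subtermAt q = some u →
    ∃ s', s.replaceAt q u' = some s' ∧
      iterRel (RelInnermost S ((D \ S) ∪ liftRules R)) c s s' := by
  induction c with
  | zero =>
    intro u u' s q h hsub
    cases h
    exact ⟨s, Term.replaceAt_self q hsub, rfl⟩
  | succ n ih =>
    intro u u' s q h hsub
    obtain ⟨w, hw, hrest⟩ := h
    obtain ⟨s₁, hr₁, hg₁⟩ := ctx_rel hw hsub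
    obtain ⟨s₂, hr₂, hg₂⟩ := ih hrest (Term.subtermAt_replaceAt q hr₁)
    exact ⟨s₂, Term.replaceAt_replaceAt q hr₁ hr₂, ⟨s₁, hg₁, hg₂⟩⟩

theorem ctx_reach {c : ℕ} {u u' s : Term (SharpSym σ) V} {q : List ℕ}
    (h : Reach D S R c u u') (hsub : s.subtermAt q = some u) :
    ∃ s', s.replaceAt q u' = some s' ∧ Reach D S R c s s' := by
  obtain ⟨m, hm, hit⟩ := h
  obtain ⟨s₁, hr₁, hg₁⟩ := ctx_rtg hm hsub
  obtain ⟨s₂, hr₂, hg₂⟩ := ctx_iter hit (Term.subtermAt_replaceAt q hr₁)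
  exact ⟨s₂, Term.replaceAt_replaceAt q hr₁ hr₂, ⟨s₁, hg₁, hg₂⟩⟩

end ReachSec


/-! ### The simulation -/

section Simulation
open Classical
variable {σ V : Type}

/-- Number of `S`-labelled nodes of `T` at positions `p ++ q`, `q ∈ Q`. -/
noncomputable def cntS (T : ChainTree σ V) (S : Set (Rule (SharpSym σ) V))
    (p : List ℕ) (Q : Finset (List ℕ)) : ℕ :=
  (Q.filter (fun q => ∃ r ν, T.label (p ++ q) = some (r, ν) ∧ r ∈ S)).card

variable {D S : Set (Rule (SharpSym σ) V)} {R : Set (Rule σ V)} {e : σ → ℕ}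

theorem cntS_split (T : ChainTree σ V) (p : List ℕ) (Q : Finset (List ℕ)) (h : ℕ) :
    cntS T S p Q =
      cntS T S p (Q.filter (fun q => q.head? ≠ some h)) +
      cntS T S (p ++ [h]) ((Q.filter (fun q => q.head? = some h)).image List.tail) := by
  classical
  have hsplit : Q.filter (fun q => ∃ r ν, T.label (p ++ q) = some (r, ν) ∧ r ∈ S) =
      (Q.filter (fun q => q.head? ≠ some h)).filter
        (fun q => ∃ r ν, T.label (p ++ q) = some (r, ν) ∧ r ∈ S) ∪
      (Q.filter (fun q => q.head? = some h)).filter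
        (fun q => ∃ r ν, T.label (p ++ q) = some (r, ν) ∧ r ∈ S) := by
    ext q
    simp only [Finset.mem_filter, Finset.mem_union]
    constructor
    · rintro ⟨hqQ, hPSq⟩
      by_cases hqh : q.head? = some h
      · exact Or.inr ⟨⟨hqQ, hqh⟩, hPSq⟩
      · exact Or.inl ⟨⟨hqQ, hqh⟩, hPSq⟩
    · rintro (⟨⟨hqQ, _⟩, hPSq⟩ | ⟨⟨hqQ, _⟩, hPSq⟩) <;> exact ⟨hqQ, hPSq⟩
  have hdisj : Disjoint ((Q.filter (fun q => q.head? ≠ some h)).filter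
        (fun q => ∃ r ν, T.label (p ++ q) = some (r, ν) ∧ r ∈ S))
      ((Q.filter (fun q => q.head? = some h)).filter
        (fun q => ∃ r ν, T.label (p ++ q) = some (r, ν) ∧ r ∈ S)) := by
    rw [Finset.disjoint_left]
    intro q hq1 hq2
    simp only [Finset.mem_filter] at hq1 hq2
    exact hq1.1.2 hq2.1.2
  simp only [cntS]
  rw [hsplit, Finset.card_union_of_disjoint hdisj]
  congr 1
  refine Finset.card_bij (fun q _ => q.tail) ?_ ?_ ?_
  · intro q hq
    simp only [Finset.mem_filter] at hq
    obtain ⟨⟨hqQ, hqh⟩, hqPS⟩ := hq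
    cases q with
    | nil => exact absurd hqh (by simp)
    | cons a q' =>
      simp only [List.head?_cons, Option.some.injEq] at hqh
      rw [show a = h from hqh] at hqQ hqPS
      simp only [Finset.mem_filter, List.tail_cons]
      refine ⟨Finset.mem_image.2 ⟨h :: q', Finset.mem_filter.2 ⟨hqQ, rfl⟩, rfl⟩, ?_⟩
      have happ : (p ++ [h]) ++ q' = p ++ h :: q' := by simp
      rw [happ]
      exact hqPS
  · intro q1 hq1 q2 hq2 htail
    simp only [Finset.mem_filter] at hq1 hq2
    cases q1 with
    | nil => exact absurd hq1.1.2 (by simp)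
    | cons a1 l1 =>
      cases q2 with
      | nil => exact absurd hq2.1.2 (by simp)
      | cons a2 l2 =>
        simp only [List.head?_cons, Option.some.injEq] at hq1 hq2
        simp only [List.tail_cons] at htail
        rw [hq1.1.2, hq2.1.2, htail]
  · intro q' hq'
    simp only [Finset.mem_filter, Finset.mem_image] at hq'
    obtain ⟨⟨q, ⟨hqQ, hqh⟩, hqt⟩, hPSx⟩ := hq'
    cases q with
    | nil => exact absurd hqh (by simp)
    | cons a l =>
      simp only [List.head?_cons, Option.some.injEq] at hqh
      simp only [List.tail_cons] at hqt
      subst hqt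
      rw [show a = h from hqh] at hqQ
      refine ⟨h :: l, Finset.mem_filter.2 ⟨Finset.mem_filter.2 ⟨hqQ, rfl⟩, ?_⟩, rfl⟩
      rw [show p ++ h :: l = (p ++ [h]) ++ l from by simp]
      exact hPSx

theorem sim (he : Function.Injective e) (hD : ∀ d ∈ D, IsDT d) (hS : S ⊆ D)
    (hR : IsWfTRS R) (T : ChainTree σ V)
    (h2 : ∀ (p : List ℕ) (i : ℕ), T.label (p ++ [i]) ≠ none → T.label p ≠ none)
    (h3 : ∀ (p : List ℕ) (r : Rule (SharpSym σ) V) (ν : V → Term (SharpSym σ) V),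
      T.label p = some (r, ν) →
        r ∈ D ∧ NormalForm (liftRules R) (Term.subst ν r.lhs) ∧
        ∀ (i : ℕ) (r' : Rule (SharpSym σ) V) (δ : V → Term (SharpSym σ) V),
          T.label (p ++ [i]) = some (r', δ) →
            ∃ (m : ℕ) (vs : List (Term (SharpSym σ) V)),
              r.rhs = Term.fn (SharpSym.com m) vs ∧
              ∃ v, vs[i]? = some v ∧
                Relation.ReflTransGen (InnermostRewrite (liftRules R))
                  (Term.subst ν v) (Term.subst δ r'.lhs)) :
    ∀ (k : ℕ) (Q : Finset (List ℕ)), Q.card ≤ k →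
      (∀ q ∈ Q, ∀ q', q' <+: q → q' ∈ Q) →
      ∀ (p : List ℕ) (r : Rule (SharpSym σ) V) (ν : V → Term (SharpSym σ) V),
        T.label p = some (r, ν) →
        (∀ q ∈ Q, T.label (p ++ q) ≠ none) →
        ∃ t', Reach D S R (cntS T S p Q) (Term.subst (fun x => Kt e (ν x)) r.lhs) t' ∧
          (Q = ∅ → t' = Term.subst (fun x => Kt e (ν x)) r.lhs) ∧
          (Q.Nonempty →
            ∃ (m : ℕ) (vs ws' : List (Term (SharpSym σ) V)),
              r.rhs = Term.fn (SharpSym.com m) vs ∧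
              t' = Term.fn (SharpSym.com m) ws' ∧
              ∀ j : ℕ, (∀ q', (j :: q') ∉ Q) →
                ws'[j]? = (vs.map (Term.subst (fun x => Kt e (ν x))))[j]?) := by
  intro k
  induction k with
  | zero =>
    intro Q hcard pc p r ν hlabel hlab
    have hQ : Q = ∅ := Finset.card_eq_zero.1 (Nat.le_zero.1 hcard)
    subst hQ
    refine ⟨_, ?_, fun _ => rfl, fun hne => absurd hne (by simp)⟩
    have : cntS T S p ∅ = 0 := by simp only [cntS]; rw [Finset.filter_empty, Finset.card_empty]
    rw [this]
    exact Reach.of_rtg Relation.ReflTransGen.refl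
  | succ n ih =>
    intro Q hcard pc p r ν hlabel hlab
    by_cases hQe : Q = ∅
    · subst hQe
      refine ⟨_, ?_, fun _ => rfl, fun hne => absurd hne (by simp)⟩
      have : cntS T S p ∅ = 0 := by simp only [cntS]; rw [Finset.filter_empty, Finset.card_empty]
      rw [this]
      exact Reach.of_rtg Relation.ReflTransGen.refl
    -- node facts
    obtain ⟨hrD, hNF, hchild⟩ := h3 p r ν hlabel
    obtain ⟨hsharp, m, vs, hrhs, hlen, hvs⟩ := hD r hrD
    set θν := fun x => Kt e (ν x) with hθν
    have hK : Term.subst θν r.lhs = KS e (Term.subst ν r.lhs) := subst_sharp_KS e ν hsharp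
    have hNF' : NormalForm (liftRules R) (Term.subst θν r.lhs) := by
      rw [hK]; exact NF_KS he hR (SRooted_subst_sharp hsharp ν) hNF
    have hANS' : ∀ p' w, p' ≠ [] → (Term.subst θν r.lhs).subtermAt p' = some w →
        ¬ SRooted w := by
      rw [hK]; exact KS_ANS e _
    have hinner := innermost_node hD hS hR (θ := θν) hrD hNF' hANS'
    have hnil : ([] : List ℕ) ∈ Q := by
      obtain ⟨q, hq⟩ := Finset.nonempty_iff_ne_empty.2 hQe
      exact pc q hq [] List.nil_prefix
    -- the root step
    have hstep : ∀ hrS : r ∈ S, AS D S R (Term.subst θν r.lhs) (Term.subst θν r.rhs) :=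
      fun hrS => ⟨[], r, hrS, θν, Term.subtermAt_nil _, hinner, Term.replaceAt_nil _ _⟩
    have hstepB : r ∉ S → BS D S R (Term.subst θν r.lhs) (Term.subst θν r.rhs) :=
      fun hrS => ⟨[], r, Or.inl ⟨hrD, hrS⟩, θν, Term.subtermAt_nil _, hinner,
        Term.replaceAt_nil _ _⟩
    have hPSnil : (∃ r' ν', T.label (p ++ []) = some (r', ν') ∧ r' ∈ S) ↔ r ∈ S := by
      rw [List.append_nil, hlabel]
      constructor
      · rintro ⟨r', ν', heq, hin⟩
        injection heq with heq
        cases heq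
        exact hin
      · exact fun h => ⟨r, ν, rfl, h⟩
    by_cases hhead : ∃ q₀ ∈ Q, q₀ ≠ []
    · -- peel a child
      obtain ⟨q₀, hq₀Q, hq₀⟩ := hhead
      obtain ⟨h, q₀', rfl⟩ : ∃ h q₀', q₀ = h :: q₀' := by
        cases q₀ with
        | nil => exact absurd rfl hq₀
        | cons a l => exact ⟨a, l, rfl⟩
      set Q' := Q.filter (fun q => q.head? ≠ some h) with hQ'
      set Qh := (Q.filter (fun q => q.head? = some h)).image List.tail with hQh
      have memQh : ∀ q', q' ∈ Qh ↔ (h :: q') ∈ Q := by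
        intro q'
        rw [hQh]
        constructor
        · intro hq
          obtain ⟨q, hqmem, hqt⟩ := Finset.mem_image.1 hq
          obtain ⟨hqQ, hqh⟩ := Finset.mem_filter.1 hqmem
          cases q with
          | nil => exact absurd hqh (by simp)
          | cons a l =>
            simp only [List.head?_cons, Option.some.injEq] at hqh
            simp only [List.tail_cons] at hqt
            rw [← hqt, ← (show a = h from hqh)]
            exact hqQ
        · intro hq
          exact Finset.mem_image.2 ⟨h :: q', Finset.mem_filter.2 ⟨hq, rfl⟩, rfl⟩
      -- cards
      have hQ'card : Q'.card < Q.card := by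
        refine Finset.card_lt_card ⟨Finset.filter_subset _ _, fun hsub => ?_⟩
        exact (Finset.mem_filter.1 (hsub hq₀Q)).2 rfl
      have hQhcard : Qh.card < Q.card := by
        calc Qh.card ≤ (Q.filter (fun q => q.head? = some h)).card :=
              Finset.card_image_le
        _ < Q.card := by
            refine Finset.card_lt_card ⟨Finset.filter_subset _ _, fun hsub => ?_⟩
            exact absurd (Finset.mem_filter.1 (hsub hnil)).2 (by simp)
      -- prefix-closedness
      have pcQ' : ∀ q ∈ Q', ∀ q', q' <+: q → q' ∈ Q' := by
        intro q hq q' hpre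
        obtain ⟨hqQ, hqh⟩ := Finset.mem_filter.1 hq
        refine Finset.mem_filter.2 ⟨pc q hqQ q' hpre, ?_⟩
        obtain ⟨tl, rfl⟩ := hpre
        cases q' with
        | nil => exact fun hc => absurd hc (by simp)
        | cons a l => simpa using hqh
      have pcQh : ∀ q ∈ Qh, ∀ q', q' <+: q → q' ∈ Qh := by
        intro q hq q' hpre
        rw [memQh] at hq ⊢
        refine pc _ hq _ ?_
        obtain ⟨tl, rfl⟩ := hpre
        exact ⟨tl, rfl⟩
      -- labels
      have hlabQ' : ∀ q ∈ Q', T.label (p ++ q) ≠ none :=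
        fun q hq => hlab q (Finset.filter_subset _ _ hq)
      have hhQ : [h] ∈ Q := pc _ hq₀Q [h] ⟨q₀', rfl⟩
      have hlabh : T.label (p ++ [h]) ≠ none := hlab _ hhQ
      obtain ⟨pr, hx⟩ : ∃ pr, T.label (p ++ [h]) = some pr :=
        Option.ne_none_iff_exists'.1 hlabh
      obtain ⟨rh, δh, hlabelh⟩ : ∃ rh δh, T.label (p ++ [h]) = some (rh, δh) :=
        ⟨pr.1, pr.2, by rw [hx]⟩
      have happ : ∀ q' : List ℕ, p ++ (h :: q') = (p ++ [h]) ++ q' := by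
        intro q'; rw [List.append_assoc]; rfl
      have hlabQh : ∀ q ∈ Qh, T.label ((p ++ [h]) ++ q) ≠ none := by
        intro q hq
        rw [← happ]
        exact hlab _ ((memQh q).1 hq)
      -- IH on Q' at the same node
      obtain ⟨t₁, hreach₁, ht₁e, ht₁ne⟩ :=
        ih Q' (by omega) pcQ' p r ν hlabel hlabQ'
      have hQ'ne : Q'.Nonempty := ⟨[], Finset.mem_filter.2 ⟨hnil, by simp⟩⟩
      obtain ⟨m₁, vs₁, ws₁, hrhs₁, ht₁, hws₁⟩ := ht₁ne hQ'ne
      obtain ⟨hm₁, hv₁⟩ : m₁ = m ∧ vs₁ = vs := by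
        rw [hrhs] at hrhs₁; injection hrhs₁ with hm hv
        injection hm with hm
        exact ⟨hm.symm, hv.symm⟩
      subst m₁; subst vs₁
      -- the child chain
      obtain ⟨m₂, vs₂, hrhs₂, v, hvh, hchain⟩ := hchild h rh δh hlabelh
      obtain ⟨hm₂, hv₂⟩ : m₂ = m ∧ vs₂ = vs := by
        rw [hrhs] at hrhs₂; injection hrhs₂ with hm hv
        injection hm with hm
        exact ⟨hm.symm, hv.symm⟩
      subst m₂; subst vs₂
      obtain ⟨hrhD, hNFh, _⟩ := h3 (p ++ [h]) rh δh hlabelh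
      have hsharph : IsSharpTerm rh.lhs := (hD rh hrhD).1
      have hvmem : v ∈ vs := by
        obtain ⟨hlt, heq⟩ := List.getElem?_eq_some_iff.1 hvh
        exact heq ▸ List.getElem_mem hlt
      have hsharpv : IsSharpTerm v := hvs v hvmem
      have htrans := (chain_transfer he hD hS hR (SRooted_subst_sharp hsharpv ν) hchain).1
      rw [← subst_sharp_KS e ν hsharpv, ← subst_sharp_KS e δh hsharph] at htrans
      -- IH at the child node
      obtain ⟨t₂, hreach₂, _, _⟩ :=
        ih Qh (by omega) pcQh (p ++ [h]) rh δh hlabelh hlabQh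
      -- assemble
      have ws₁h : ws₁[h]? = some (Term.subst θν v) := by
        rw [hws₁ h (fun q' hq' => (Finset.mem_filter.1 hq').2 rfl),
          List.getElem?_map, hvh, Option.map_some]
      have hsub₁ : t₁.subtermAt [h] = some (Term.subst θν v) := by
        rw [ht₁, Term.subtermAt_single, ws₁h]
      obtain ⟨s₂, hrep₂, hrtg₂⟩ := ctx_rtg htrans hsub₁
      obtain ⟨s₃, hrep₃, hreach₃⟩ := ctx_reach hreach₂ (Term.subtermAt_replaceAt _ hrep₂)
      have hReach : Reach D S R (cntS T S p Q' + cntS T S (p ++ [h]) Qh) 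
          (Term.subst θν r.lhs) s₃ :=
        (hreach₁.absorb_right hrtg₂).trans hreach₃
      -- identify s₂ and s₃
      rw [ht₁, Term.replaceAt_single ws₁h, Option.some.injEq] at hrep₂
      have hlen₁ : h < ws₁.length := (List.getElem?_eq_some_iff.1 ws₁h).1
      have hget₂ : (ws₁.set h (Term.subst (fun x => Kt e (δh x)) rh.lhs))[h]? =
          some (Term.subst (fun x => Kt e (δh x)) rh.lhs) :=
        List.getElem?_set_eq_of_lt _ (by simpa using hlen₁)
      rw [← hrep₂, Term.replaceAt_single hget₂, Option.some.injEq, List.set_set] at hrep₃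
      refine ⟨s₃, ?_, fun hc => absurd (hc ▸ hnil) (Finset.notMem_empty _), ?_⟩
      · rw [cntS_split T p Q h, ← hQ', ← hQh]
        exact hReach
      · intro _
        refine ⟨m, vs, ws₁.set h t₂, hrhs, hrep₃.symm, fun j hj => ?_⟩
        have hjh : h ≠ j := fun hjh => hj q₀' (hjh ▸ hq₀Q)
        rw [List.getElem?_set_ne hjh]
        exact hws₁ j (fun q' hq' => hj q' (Finset.filter_subset _ _ hq'))
    · -- Q = {[]}
      have hQsing : Q = {[]} := by
        apply Finset.eq_singleton_iff_unique_mem.2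
        refine ⟨hnil, fun q hq => ?_⟩
        by_contra hne
        exact hhead ⟨q, hq, hne⟩
      have hcnt : cntS T S p Q = if r ∈ S then 1 else 0 := by
        simp only [cntS]
        rw [hQsing, Finset.filter_singleton]
        by_cases hrS : r ∈ S
        · rw [if_pos (hPSnil.2 hrS), if_pos hrS, Finset.card_singleton]
        · rw [if_neg (fun hc => hrS (hPSnil.1 hc)), if_neg hrS, Finset.card_empty]
      refine ⟨Term.subst θν r.rhs, ?_, fun hc => (Finset.singleton_ne_empty ([] : List ℕ) (by rw [← hQsing, hc])).elim, ?_⟩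
      · rw [hcnt]
        by_cases hrS : r ∈ S
        · rw [if_pos hrS]; exact Reach.of_A (hstep hrS)
        · rw [if_neg hrS]; exact Reach.of_B (hstepB hrS)
      · intro _
        refine ⟨m, vs, vs.map (Term.subst θν), hrhs, ?_, fun j _ => rfl⟩
        rw [hrhs, Term.subst_fn]
end Simulation


/-! ### Final assembly -/

section Assembly
open Classical
variable {σ V : Type}

theorem enat_le_of_forall {a b : ℕ∞}
    (h : ∀ k : ℕ, (k : ℕ∞) ≤ a → (k : ℕ∞) ≤ b) : a ≤ b := by
  induction a using ENat.recTopCoe with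
  | top =>
    induction b using ENat.recTopCoe with
    | top => exact le_rfl
    | coe nb =>
      have := h (nb + 1) le_top
      rw [Nat.cast_le] at this
      omega
  | coe na => exact h na le_rfl

theorem dh_lower {α : Type} {r : α → α → Prop} {t : α} {k : ℕ}
    (h : ∃ t', iterRel r k t t') : (k : ℕ∞) ≤ Dh r t :=
  le_sSup ⟨k, rfl, h⟩

theorem label_pre (T : ChainTree σ V)
    (h2 : ∀ (p : List ℕ) (i : ℕ), T.label (p ++ [i]) ≠ none → T.label p ≠ none) :
    ∀ (b a : List ℕ), T.label (a ++ b) ≠ none → T.label a ≠ none := by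
  intro b
  induction b using List.reverseRecOn with
  | nil => intro a h; simpa using h
  | append_singleton b i ihb =>
    intro a h
    rw [← List.append_assoc] at h
    exact ihb a (h2 (a ++ b) i h)

theorem sizeList_embed (ts : List (Term σ V)) :
    Term.sizeList (ts.map Term.embed) = Term.sizeList ts := by
  induction ts with
  | nil => rfl
  | cons u ts ih => rw [List.map_cons, Term.sizeList, Term.sizeList, Term.size_embed, ih]

variable {D S : Set (Rule (SharpSym σ) V)} {R : Set (Rule σ V)}

theorem cons_transfer (hD : ∀ d ∈ D, IsDT d) (hS : S ⊆ D) (hR : IsWfTRS R)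
    {u : Term σ V} (h : ConsTerm R u) :
    ConsTerm (S ∪ ((D \ S) ∪ liftRules R)) (Term.embed u) := by
  induction h with
  | var x => exact ConsTerm.var x
  | fn f ts hnd hts ih =>
    rw [Term.embed_fn]
    refine ConsTerm.fn _ _ ?_ ?_
    · rintro ⟨rule, hrule, ts'', hlhs⟩
      have hcase : rule ∈ D ∨ rule ∈ liftRules R := by
        rcases hrule with h | h | h
        · exact Or.inl (hS h)
        · exact Or.inl h.1
        · exact Or.inr h
      rcases hcase with hd | hl
      · obtain ⟨⟨g, args, heq, _⟩, _⟩ := hD rule hd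
        rw [hlhs] at heq
        injection heq with h1 _
        cases h1
      · obtain ⟨ρ, g, ls, hρ, rfl, hρlhs⟩ := liftRules_lhs hR hl
        have key : Term.fn (SharpSym.base g) (ls.map Term.embed) =
            Term.fn (SharpSym.base f) ts'' := by
          rw [← Term.embed_fn, ← hρlhs]
          exact hlhs
        injection key with h1 _
        injection h1 with h1
        exact hnd ⟨ρ, hρ, ls, by rw [hρlhs, h1]⟩
    · intro u' hu'
      obtain ⟨u₀, hu₀, rfl⟩ := List.mem_map.1 hu'
      exact ih u₀ hu₀

theorem ircDTP_le_ircRel'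
    [Finite σ]
    (hD : ∀ d ∈ D, IsDT d) (hS : S ⊆ D) (hR : IsWfTRS R) :
    ∀ n : ℕ, ircDTP D S R n ≤ ircRel S ((D \ S) ∪ liftRules R) n := by
  intro n
  obtain ⟨N, ⟨eqv⟩⟩ := Finite.exists_equiv_fin σ
  set e : σ → ℕ := fun f => (eqv f).val with he'
  have he : Function.Injective e :=
    fun a b hab => eqv.injective (Fin.val_injective hab)
  refine sSup_le ?_
  rintro c ⟨t, hbasic, hsize, rfl⟩
  refine sSup_le ?_
  rintro c' ⟨T, hCT, rfl⟩
  obtain ⟨⟨r₀, ν₀, hroot, hrooteq⟩, h2, h3⟩ := hCT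
  -- structure of `t` and its sharp
  obtain ⟨f, ts, rfl, hdef, hcons⟩ := hbasic
  have hsharpt : Term.sharp R (Term.fn f ts) =
      Term.fn (SharpSym.sharp f) (ts.map Term.embed) := by
    rw [Term.sharp, if_pos hdef, Term.embedList_eq_map]
  -- the root rule is a DT in D
  have hr₀D : r₀ ∈ D := (h3 [] r₀ ν₀ hroot).1
  obtain ⟨⟨f₀, args₀, hlhs₀, hargs₀⟩, _⟩ := hD r₀ hr₀D
  have hf₀ : f₀ = f := by
    have hh := hrooteq
    rw [hlhs₀, Term.subst_fn, hsharpt] at hh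
    injection hh with h1 _
    injection h1
  -- `t#` is basic for the whole system
  have hbW : BasicTerm (S ∪ ((D \ S) ∪ liftRules R)) (Term.sharp R (Term.fn f ts)) := by
    rw [hsharpt]
    refine ⟨SharpSym.sharp f, ts.map Term.embed, rfl, ?_, ?_⟩
    · refine ⟨r₀, ?_, args₀, by rw [hlhs₀, hf₀]⟩
      by_cases hr₀S : r₀ ∈ S
      · exact Or.inl hr₀S
      · exact Or.inr (Or.inl ⟨hr₀D, hr₀S⟩)
    · intro u hu
      obtain ⟨u₀, hu₀, rfl⟩ := List.mem_map.1 hu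
      exact cons_transfer hD hS hR (hcons u₀ hu₀)
  have hsizeW : (Term.sharp R (Term.fn f ts)).size ≤ n := by
    rw [hsharpt, Term.size, sizeList_embed]
    rw [Term.size] at hsize
    exact hsize
  -- Dh ≤ ircRel
  have hDhle : Dh (RelInnermost S ((D \ S) ∪ liftRules R)) (Term.sharp R (Term.fn f ts)) ≤
      ircRel S ((D \ S) ∪ liftRules R) n :=
    le_sSup ⟨_, hbW, hsizeW, rfl⟩
  refine le_trans (enat_le_of_forall ?_) hDhle
  -- for each k ≤ treeCount, build a derivation of length k
  intro k hk
  rw [treeCount] at hk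
  obtain ⟨P', hP'sub, hP'card⟩ := Set.exists_subset_encard_eq hk
  have hP'fin : P'.Finite := Set.finite_of_encard_eq_coe hP'card
  set P : Finset (List ℕ) := hP'fin.toFinset with hP
  have hPcard : P.card = k := by
    have := hP'fin.encard_eq_coe_toFinset_card
    rw [hP'card] at this
    exact_mod_cast this.symm
  have hPS : ∀ p ∈ P, ∃ r ν, T.label p = some (r, ν) ∧ r ∈ S := by
    intro p hp
    exact hP'sub (hP'fin.mem_toFinset.1 hp)
  -- prefix closure
  set Q : Finset (List ℕ) := P.biUnion (fun p => p.inits.toFinset) with hQ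
  have memQ : ∀ q, q ∈ Q ↔ ∃ p ∈ P, q <+: p := by
    intro q
    rw [hQ]
    simp only [Finset.mem_biUnion, List.mem_toFinset, List.mem_inits]
  have pcQ : ∀ q ∈ Q, ∀ q', q' <+: q → q' ∈ Q := by
    intro q hq q' hpre
    obtain ⟨p, hp, hqp⟩ := (memQ q).1 hq
    exact (memQ q').2 ⟨p, hp, hpre.trans hqp⟩
  have hlabQ : ∀ q ∈ Q, T.label ([] ++ q) ≠ none := by
    intro q hq
    rw [List.nil_append]
    obtain ⟨p, hp, hqp⟩ := (memQ q).1 hq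
    obtain ⟨tl, rfl⟩ := hqp
    obtain ⟨r, ν, hlab, _⟩ := hPS _ hp
    exact label_pre T h2 tl q (by rw [hlab]; simp)
  have hPsubQ : P ⊆ Q := fun p hp => (memQ p).2 ⟨p, hp, List.prefix_refl p⟩
  have hkcnt : k ≤ cntS T S [] Q := by
    rw [← hPcard]
    simp only [cntS]
    refine Finset.card_le_card ?_
    intro p hp
    refine Finset.mem_filter.2 ⟨hPsubQ hp, ?_⟩
    rw [List.nil_append]
    exact hPS p hp
  -- run the simulation
  obtain ⟨t', hreach, _, _⟩ :=
    sim he hD hS hR T h2 h3 Q.card Q le_rfl pcQ [] r₀ ν₀ hroot hlabQ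
  -- identify the start term
  have hstart : Term.subst (fun x => Kt e (ν₀ x)) r₀.lhs =
      Term.sharp R (Term.fn f ts) := by
    rw [subst_sharp_KS e ν₀ ⟨f₀, args₀, hlhs₀, hargs₀⟩, hrooteq, hsharpt, KS]
    congr 1
    rw [List.map_map]
    exact List.map_congr_left (fun u _ => Kt_embed e u)
  rw [hstart] at hreach
  obtain ⟨t'', hiter⟩ := hreach.to_iterRel
  exact dh_lower (iterRel_trunc hkcnt hiter)

end Assembly

/-- For a DT problem `⟨D,S,R⟩`,
`irc_{⟨D,S,R⟩}(n) ≤ irc_{S/((D∖S)∪R)}(n)` for all `n`. -/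
theorem ircDTP_le_ircRel
    {σ V : Type} [Finite σ]
    (D S : Set (Rule (SharpSym σ) V)) (R : Set (Rule σ V))
    (hD : ∀ d ∈ D, IsDT d) (hS : S ⊆ D) (hR : IsWfTRS R) :
    ∀ n : ℕ, ircDTP D S R n ≤ ircRel S ((D \ S) ∪ liftRules R) n :=
  ircDTP_le_ircRel' hD hS hR

end ParallelComplexity
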